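/- arXiv:2103.09761 — 3 statements merged into one kernel-verified Lean document; each statement's English description precedes it below -/
import Mathlib

section
/- Let X be a compound Poisson process with jump rate RT whose jumps are exponential with parameter T, with R ≥ 1/2. Then for any δ, t, A > 0, P(|X(s) − As| < δ for all s ≤ t) ≤ exp(−tT(√R − √A)² + δ|1 − √(R/A)|·T). -/
open MeasureTheory ProbabilityTheory Real Set
open scoped ENNReal NNReal

namespace CppAux

lemma measurable_expPDF (r : ℝ) : Measurable (exponentialPDF r) :=
  (measurable_exponentialPDFReal r).ennreal_ofReal

lemma expMeasure_lintegral {r : ℝ} (hr : 0 < r) {f : ℝ → ℝ≥0∞} (hf : Measurable f) :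
    ∫⁻ x, f x ∂(expMeasure r)
      = ∫⁻ x in Ici 0, ENNReal.ofReal (r * Real.exp (-(r*x))) * f x := by
  have h1 : ∫⁻ x, f x ∂(expMeasure r) = ∫⁻ x, exponentialPDF r x * f x := by
    rw [show expMeasure r = volume.withDensity (exponentialPDF r) from rfl,
      lintegral_withDensity_eq_lintegral_mul _ (measurable_expPDF r) hf]
    rfl
  have h2 : (fun x => exponentialPDF r x * f x)
      = (Ici (0:ℝ)).indicator (fun x => ENNReal.ofReal (r * Real.exp (-(r*x))) * f x) := by
    funext x
    by_cases hx : (0:ℝ) ≤ x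
    · simp only [Set.indicator_apply, mem_Ici, if_pos hx, exponentialPDF_of_nonneg hx]
    · simp only [Set.indicator_apply, mem_Ici, if_neg hx,
        exponentialPDF_of_neg (lt_of_not_ge hx), zero_mul]
  rw [h1, h2, lintegral_indicator measurableSet_Ici]

lemma expMeasure_lintegral_exp_mul {r : ℝ} (hr : 0 < r) {h : ℝ → ℝ≥0∞} (hh : Measurable h) :
    ∫⁻ x, ENNReal.ofReal (Real.exp (r*x)) * h x ∂(expMeasure r)
      = ENNReal.ofReal r * ∫⁻ x in Ici 0, h x := by
  have hm : Measurable fun x : ℝ => ENNReal.ofReal (Real.exp (r*x)) * h x := by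
    fun_prop
  rw [expMeasure_lintegral hr hm, ← lintegral_const_mul _ hh]
  refine setLIntegral_congr_fun measurableSet_Ici (fun x hx => ?_)
  rw [← mul_assoc, ← ENNReal.ofReal_mul (by positivity)]
  congr 2
  rw [mul_assoc, ← Real.exp_add]
  simp

lemma expMeasure_cut {r : ℝ} (hr : 0 < r) (c : ℝ) :
    ∫⁻ x, (if x ≤ c then ENNReal.ofReal (Real.exp (r*x)) else 0) ∂(expMeasure r)
      = ENNReal.ofReal r * ENNReal.ofReal c := by
  have h1 : (fun x : ℝ => if x ≤ c then ENNReal.ofReal (Real.exp (r*x)) else 0)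
      = fun x => ENNReal.ofReal (Real.exp (r*x)) * (Iic c).indicator (fun _ => 1) x := by
    funext x
    by_cases hx : x ≤ c
    · simp [Set.indicator_apply, hx]
    · simp [Set.indicator_apply, hx]
  rw [show (∫⁻ x, (if x ≤ c then ENNReal.ofReal (Real.exp (r*x)) else 0) ∂(expMeasure r))
      = ∫⁻ x, ENNReal.ofReal (Real.exp (r*x)) * (Iic c).indicator (fun _ => 1) x ∂(expMeasure r)
    from by rw [← h1],
    expMeasure_lintegral_exp_mul hr (measurable_const.indicator measurableSet_Iic)]
  congr 1
  rw [lintegral_indicator measurableSet_Iic, Measure.restrict_restrict measurableSet_Iic,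
    setLIntegral_one, Set.Iic_inter_Ici, Real.volume_Icc]
  by_cases hc : 0 ≤ c
  · rw [sub_zero]
  · rw [ENNReal.ofReal_eq_zero.2 (by linarith), ENNReal.ofReal_eq_zero.2 (by linarith)]



lemma expMeasure_mgf {r : ℝ} (hr : 0 < r) {q : ℝ} (hq : q < r) :
    ∫⁻ x, ENNReal.ofReal (Real.exp (q*x)) ∂(expMeasure r)
      = ENNReal.ofReal (r / (r - q)) := by
  have hb : 0 < r - q := by linarith
  have h1 : (fun x : ℝ => ENNReal.ofReal (Real.exp (q*x)))
      = fun x => ENNReal.ofReal (Real.exp (r*x))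
        * ENNReal.ofReal (Real.exp (-((r-q)*x))) := by
    funext x
    rw [← ENNReal.ofReal_mul (by positivity), ← Real.exp_add]
    ring_nf
  rw [h1, expMeasure_lintegral_exp_mul hr (by fun_prop)]
  have h2 : ∫⁻ x in Ici (0:ℝ), ENNReal.ofReal (Real.exp (-((r-q)*x)))
      = ENNReal.ofReal (1 / (r - q)) := by
    have hint : IntegrableOn (fun x : ℝ => Real.exp (-((r-q)*x))) (Ici 0) := by
      rw [integrableOn_Ici_iff_integrableOn_Ioi]
      have := exp_neg_integrableOn_Ioi 0 hb
      refine this.congr_fun (fun x _ => by ring_nf) measurableSet_Ioi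
    rw [← ofReal_integral_eq_lintegral_ofReal hint (ae_of_all _ fun x => (Real.exp_pos _).le)]
    congr 1
    rw [integral_Ici_eq_integral_Ioi]
    have := integral_comp_mul_left_Ioi (fun x => Real.exp (-x)) 0 hb
    simp only [mul_zero, neg_mul, integral_exp_neg_Ioi, neg_zero, Real.exp_zero,
      smul_eq_mul, mul_one] at this
    rw [show (fun x : ℝ => Real.exp (-((r-q)*x))) = fun x => Real.exp (-((r-q)*x)) from rfl]
    simpa [neg_mul, one_div] using this
  rw [h2, ← ENNReal.ofReal_mul hr.le]
  congr 1
  field_simp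

lemma expMeasure_Ioi {r : ℝ} (hr : 0 < r) {a : ℝ} (ha : 0 ≤ a) :
    expMeasure r (Ioi a) = ENNReal.ofReal (Real.exp (-(r*a))) := by
  haveI : IsProbabilityMeasure (expMeasure r) := isProbabilityMeasure_expMeasure hr
  have h1 : expMeasure r (Iic a) = ENNReal.ofReal (1 - Real.exp (-(r*a))) := by
    rw [show expMeasure r = volume.withDensity (exponentialPDF r) from rfl,
      withDensity_apply _ measurableSet_Iic]
    simpa [ha] using lintegral_exponentialPDF_eq_antiDeriv hr a
  have h2 : Ioi a = (Iic a)ᶜ := by simp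
  rw [h2, measure_compl measurableSet_Iic (measure_ne_top _ _), h1, measure_univ]
  have he1 : Real.exp (-(r*a)) ≤ 1 := Real.exp_le_one_iff.2 (by nlinarith)
  rw [show (1:ℝ≥0∞) = ENNReal.ofReal 1 by simp, ← ENNReal.ofReal_sub _ (by linarith)]
  norm_num

lemma indep_lintegral_eq {Ω : Type*} [MeasurableSpace Ω] (μ : Measure Ω)
    [IsProbabilityMeasure μ] {X Y : Ω → ℝ} (hX : Measurable X) (hY : Measurable Y)
    (hXY : IndepFun X Y μ) {F : ℝ → ℝ → ℝ≥0∞} (hF : Measurable (Function.uncurry F)) :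
    ∫⁻ ω, F (X ω) (Y ω) ∂μ = ∫⁻ x, ∫⁻ y, F x y ∂(μ.map Y) ∂(μ.map X) := by
  haveI : IsProbabilityMeasure (μ.map X) := Measure.isProbabilityMeasure_map hX.aemeasurable
  haveI : IsProbabilityMeasure (μ.map Y) := Measure.isProbabilityMeasure_map hY.aemeasurable
  have hmap := (indepFun_iff_map_prod_eq_prod_map_map hX.aemeasurable hY.aemeasurable).1 hXY
  have h1 : ∫⁻ ω, F (X ω) (Y ω) ∂μ
      = ∫⁻ p, Function.uncurry F p ∂(μ.map (fun ω => (X ω, Y ω))) :=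
    (lintegral_map hF (hX.prodMk hY)).symm
  rw [h1, hmap, lintegral_prod _ hF.aemeasurable]
  rfl

lemma iIndepFun_congr {Ω ι : Type*} [MeasurableSpace Ω] {μ : Measure Ω} {f g : ι → Ω → ℝ}
    (h : iIndepFun f μ)
    (hfg : ∀ i, f i =ᵐ[μ] g i) :
    iIndepFun g μ := by
  rw [iIndepFun_iff_measure_inter_preimage_eq_mul] at h ⊢
  intro S sets hmeas
  have h1 := h S hmeas
  have hae : ∀ i, (f i ⁻¹' sets i : Set Ω) =ᵐ[μ] (g i ⁻¹' sets i : Set Ω) := fun i =>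
    Filter.eventuallyEq_set.2 ((hfg i).mono fun ω hω => by
      simp only [Set.mem_preimage, hω])
  have hall : ∀ᵐ ω ∂μ, ∀ i ∈ S, f i ω = g i ω :=
    (MeasureTheory.ae_ball_iff S.countable_toSet).2 fun i _ => hfg i
  have h2 : μ (⋂ i ∈ S, g i ⁻¹' sets i) = μ (⋂ i ∈ S, f i ⁻¹' sets i) :=
    measure_congr (Filter.eventuallyEq_set.2 (hall.mono fun ω hω => by
      simp only [Set.mem_iInter, Set.mem_preimage]
      exact ⟨fun h' i hi => (hω i hi) ▸ h' i hi, fun h' i hi => (hω i hi).symm ▸ h' i hi⟩))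
  rw [h2, h1]
  exact Finset.prod_congr rfl fun i _ => (measure_congr (hae i))
lemma tilt_algebra {R A T t δ : ℝ} (hR : 0 < R) (hA : 0 < A) (hT : 0 < T) :
    (R*T)*t*((T/(T - T*(1 - Real.sqrt (R/A)))) - 1)
      - ((T*(1 - Real.sqrt (R/A)))*(A*t) - |T*(1 - Real.sqrt (R/A))| *δ)
    = -(t*T*(Real.sqrt R - Real.sqrt A)^2) + δ*|1 - Real.sqrt (R/A)| *T := by
  have hsR : 0 < Real.sqrt R := Real.sqrt_pos.2 hR
  have hsA : 0 < Real.sqrt A := Real.sqrt_pos.2 hA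
  have hdiv : Real.sqrt (R/A) = Real.sqrt R / Real.sqrt A := Real.sqrt_div hR.le A
  have hRe : Real.sqrt R ^ 2 = R := Real.sq_sqrt hR.le
  have hAe : Real.sqrt A ^ 2 = A := Real.sq_sqrt hA.le
  rw [hdiv, abs_mul, abs_of_pos hT]
  have hTq : T - T*(1 - Real.sqrt R / Real.sqrt A) = T*(Real.sqrt R / Real.sqrt A) := by ring
  rw [hTq]
  have hm : T / (T*(Real.sqrt R / Real.sqrt A)) = Real.sqrt A / Real.sqrt R := by
    rw [div_eq_div_iff (by positivity) hsR.ne']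
    field_simp
  rw [hm]
  set w : ℝ := |1 - Real.sqrt R / Real.sqrt A| with hw
  set sR : ℝ := Real.sqrt R with hsRdef
  set sA : ℝ := Real.sqrt A with hsAdef
  rw [← hRe, ← hAe]
  field_simp
  ring

end CppAux

open CppAux

noncomputable def cppX {Ω : Type*} (E J : ℕ → Ω → ℝ) (s : ℝ) (ω : Ω) : ℝ :=
  ∑' i : ℕ, if (∑ k ∈ Finset.range (i + 1), E k ω) ≤ s then J i ω else 0

/-- Upper bound for a compound Poisson process with jump rate `RT` (`R ≥ 1/2`) and `Exp(T)`
jumps staying in a tube around the line `s ↦ As`: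
`P(|X(s) − As| < δ ∀ s ≤ t) ≤ exp(−tT(√R − √A)² + δ|1 − √(R/A)|T)`. -/
theorem cpp_tube_upper {Ω : Type*} [MeasurableSpace Ω] (μ : Measure Ω) [IsProbabilityMeasure μ]
    (R T : ℝ) (hR : (1:ℝ)/2 ≤ R) (hT : 0 < T) (E J : ℕ → Ω → ℝ)
    (hindep : iIndepFun
      (Sum.elim E J) μ)
    (hE : ∀ i, μ.map (E i) = expMeasure (R * T))
    (hJ : ∀ i, μ.map (J i) = expMeasure T)
    (δ t A : ℝ) (hδ : 0 < δ) (ht : 0 < t) (hA : 0 < A) :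
    μ {ω | ∀ s ∈ Set.Icc (0:ℝ) t, |cppX E J s ω - A * s| < δ}
      ≤ ENNReal.ofReal
          (Real.exp (-(t * T * (Real.sqrt R - Real.sqrt A) ^ 2)
            + δ * |1 - Real.sqrt (R / A)| * T)) := by
  classical
  have hR0 : (0:ℝ) < R := lt_of_lt_of_le (by norm_num) hR
  set β : ℝ := R * T with hβdef
  have hβ : 0 < β := mul_pos hR0 hT
  haveI hPE : IsProbabilityMeasure (expMeasure β) := isProbabilityMeasure_expMeasure hβ
  haveI hPJ : IsProbabilityMeasure (expMeasure T) := isProbabilityMeasure_expMeasure hT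
  -- a.e. measurability of the data
  have haeE : ∀ i, AEMeasurable (E i) μ := by
    intro i
    by_contra h
    have h0 := hE i
    rw [Measure.map_of_not_aemeasurable h] at h0
    have : (0 : Measure ℝ) Set.univ = expMeasure β Set.univ := by rw [h0]
    simp [measure_univ] at this
  have haeJ : ∀ i, AEMeasurable (J i) μ := by
    intro i
    by_contra h
    have h0 := hJ i
    rw [Measure.map_of_not_aemeasurable h] at h0
    have : (0 : Measure ℝ) Set.univ = expMeasure T Set.univ := by rw [h0]
    simp [measure_univ] at this
  -- measurable modifications
  set E' : ℕ → Ω → ℝ := fun i => (haeE i).mk (E i) with hE'def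
  set J' : ℕ → Ω → ℝ := fun i => (haeJ i).mk (J i) with hJ'def
  have hE'meas : ∀ i, Measurable (E' i) := fun i => (haeE i).measurable_mk
  have hJ'meas : ∀ i, Measurable (J' i) := fun i => (haeJ i).measurable_mk
  have hEE' : ∀ i, E i =ᵐ[μ] E' i := fun i => (haeE i).ae_eq_mk
  have hJJ' : ∀ i, J i =ᵐ[μ] J' i := fun i => (haeJ i).ae_eq_mk
  have hE'law : ∀ i, μ.map (E' i) = expMeasure β := fun i =>
    (Measure.map_congr (hEE' i)).symm.trans (hE i)
  have hJ'law : ∀ i, μ.map (J' i) = expMeasure T := fun i =>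
    (Measure.map_congr (hJJ' i)).symm.trans (hJ i)
  set f : ℕ ⊕ ℕ → Ω → ℝ := Sum.elim E' J' with hfdef
  have hfmeas : ∀ i, Measurable (f i) := by rintro (i | i); exacts [hE'meas i, hJ'meas i]
  have hindep' : iIndepFun f μ := by
    refine iIndepFun_congr hindep ?_
    rintro (i | i)
    · exact hEE' i
    · exact hJJ' i
  -- partial sums
  set Sp : ℕ → Ω → ℝ := fun n ω => ∑ k ∈ Finset.range n, E' k ω with hSpdef
  set Kp : ℕ → Ω → ℝ := fun n ω => ∑ k ∈ Finset.range n, J' k ω with hKpdef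
  have hSpmeas : ∀ n, Measurable (Sp n) := fun n =>
    Finset.measurable_sum _ fun i _ => hE'meas i
  have hKpmeas : ∀ n, Measurable (Kp n) := fun n =>
    Finset.measurable_sum _ fun i _ => hJ'meas i
  -- the exponential tilt parameter
  set q : ℝ := T * (1 - Real.sqrt (R / A)) with hqdef
  have hsRA : 0 < Real.sqrt (R / A) := Real.sqrt_pos.2 (div_pos hR0 hA)
  have hqT : q < T := by
    have : 1 - Real.sqrt (R / A) < 1 := by linarith
    calc q < T * 1 := by rw [hqdef]; exact (mul_lt_mul_iff_right₀ hT).2 this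
    _ = T := mul_one T
  have hTq : 0 < T - q := by linarith
  set m' : ℝ := T / (T - q) with hm'def
  have hm'pos : 0 < m' := div_pos hT hTq
  -- independence facts
  have I1 : ∀ n, IndepFun (Sp n) (E' n) μ := by
    intro n
    have h0 := hindep'.indepFun_finsetSum_of_notMem hfmeas
      (s := (Finset.range n).image Sum.inl) (i := Sum.inl n) (by simp)
    have hs : (∑ j ∈ (Finset.range n).image Sum.inl, f j) = Sp n := by
      rw [Finset.sum_image (fun x _ y _ h => Sum.inl.inj h)]
      funext ω
      rw [Finset.sum_apply]
      rfl
    rwa [hs] at h0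
  have I2 : ∀ n, IndepFun (Kp n) (J' n) μ := by
    intro n
    have h0 := hindep'.indepFun_finsetSum_of_notMem hfmeas
      (s := (Finset.range n).image Sum.inr) (i := Sum.inr n) (by simp)
    have hs : (∑ j ∈ (Finset.range n).image Sum.inr, f j) = Kp n := by
      rw [Finset.sum_image (fun x _ y _ h => Sum.inr.inj h)]
      funext ω
      rw [Finset.sum_apply]
      rfl
    rwa [hs] at h0
  have I3 : ∀ n, IndepFun (fun ω => (Sp n ω, E' n ω)) (Kp n) μ := by
    intro n
    have hdisj : Disjoint ((Finset.range (n+1)).image Sum.inl)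
        ((Finset.range n).image Sum.inr) := by
      rw [Finset.disjoint_left]
      rintro a ha hb
      obtain ⟨k, _, rfl⟩ := Finset.mem_image.1 ha
      obtain ⟨l, _, hl⟩ := Finset.mem_image.1 hb
      cases hl
    have h0 := hindep'.indepFun_finset _ _ hdisj hfmeas
    let φ : (∀ _i : ((Finset.range (n+1)).image Sum.inl : Finset (ℕ ⊕ ℕ)), ℝ) → ℝ × ℝ :=
      fun v =>
      (∑ k ∈ (Finset.range n).attach,
          v ⟨Sum.inl k.1, Finset.mem_image_of_mem _
            (Finset.mem_range.2 (Nat.lt_succ_of_lt (Finset.mem_range.1 k.2)))⟩,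
       v ⟨Sum.inl n, Finset.mem_image_of_mem _ (Finset.mem_range.2 (Nat.lt_succ_self n))⟩)
    let ψ : (∀ _i : ((Finset.range n).image Sum.inr : Finset (ℕ ⊕ ℕ)), ℝ) → ℝ :=
      fun v => ∑ k ∈ (Finset.range n).attach,
        v ⟨Sum.inr k.1, Finset.mem_image_of_mem _ k.2⟩
    have hφ : Measurable φ := by
      apply Measurable.prodMk
      · exact Finset.measurable_sum _ fun k _ => measurable_pi_apply _
      · exact measurable_pi_apply _
    have hψ : Measurable ψ := by
      exact Finset.measurable_sum _ fun k _ => measurable_pi_apply _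
    have h1 := h0.comp hφ hψ
    have e1 : (φ ∘ fun a i => f i.1 a) = fun ω => (Sp n ω, E' n ω) := by
      funext ω
      simp only [Function.comp_apply, φ]
      congr 1
      rw [show Sp n ω = ∑ k ∈ Finset.range n, E' k ω from rfl,
        ← Finset.sum_attach (Finset.range n) (fun k => E' k ω)]
      rfl
    have e2 : (ψ ∘ fun a i => f i.1 a) = Kp n := by
      funext ω
      simp only [Function.comp_apply, ψ]
      rw [show Kp n ω = ∑ k ∈ Finset.range n, J' k ω from rfl,
        ← Finset.sum_attach (Finset.range n) (fun k => J' k ω)]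
      rfl
    rwa [e1, e2] at h1
  have pairlaw : ∀ n (F : ℝ → ℝ → ℝ≥0∞), Measurable (Function.uncurry F) →
      ∫⁻ ω, F (Sp n ω) (E' n ω) ∂μ = ∫⁻ x, ∫⁻ y, F x y ∂(expMeasure β) ∂(μ.map (Sp n)) := by
    intro n F hF
    rw [indep_lintegral_eq μ (hSpmeas n) (hE'meas n) (I1 n) hF, hE'law n]
  -- the key Gamma-type computation
  have hG : ∀ n, ∀ c : ℝ,
      (∫⁻ ω, (if Sp n ω ≤ c then ENNReal.ofReal (Real.exp (β * Sp n ω)) else 0) ∂μ)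
        = if 0 ≤ c then ENNReal.ofReal ((β*c)^n / n.factorial) else 0 := by
    intro n
    induction n with
    | zero =>
      intro c
      have h0 : ∀ ω : Ω, Sp 0 ω = 0 := fun ω => by simp [hSpdef]
      have e : (fun ω => if Sp 0 ω ≤ c then ENNReal.ofReal (Real.exp (β * Sp 0 ω)) else 0)
          = fun _ω => if 0 ≤ c then (1:ℝ≥0∞) else 0 := by
        funext ω; rw [h0 ω]; simp
      rw [lintegral_congr (fun ω => congrFun e ω), lintegral_const]
      by_cases hc : 0 ≤ c <;> simp [hc]
    | succ n ih =>
      intro c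
      have hstep : ∀ ω, Sp (n+1) ω = Sp n ω + E' n ω := fun ω => Finset.sum_range_succ _ _
      set F : ℝ → ℝ → ℝ≥0∞ :=
        fun x y => if x + y ≤ c then ENNReal.ofReal (Real.exp (β*(x+y))) else 0 with hFdef
      have hFmeas : Measurable (Function.uncurry F) := by
        apply Measurable.ite
        · exact measurableSet_le (measurable_fst.add measurable_snd) measurable_const
        · exact ((measurable_fst.add measurable_snd).const_mul β).exp.ennreal_ofReal
        · exact measurable_const
      have l1 : (∫⁻ ω, (if Sp (n+1) ω ≤ c
            then ENNReal.ofReal (Real.exp (β * Sp (n+1) ω)) else 0) ∂μ)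
          = ∫⁻ ω, F (Sp n ω) (E' n ω) ∂μ :=
        lintegral_congr fun ω => by rw [hstep ω]
      rw [l1, pairlaw n F hFmeas]
      haveI : IsProbabilityMeasure (μ.map (Sp n)) :=
        Measure.isProbabilityMeasure_map (hSpmeas n).aemeasurable
      rw [lintegral_lintegral_swap hFmeas.aemeasurable]
      have inner : ∀ y : ℝ, (∫⁻ x, F x y ∂(μ.map (Sp n)))
          = ENNReal.ofReal (Real.exp (β*y)) *
            (if 0 ≤ c - y then ENNReal.ofReal ((β*(c-y))^n / n.factorial) else 0) := by
        intro y
        have hmeas1 : Measurable (fun x : ℝ =>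
            if x ≤ c - y then ENNReal.ofReal (Real.exp (β*x)) else 0) := by
          apply Measurable.ite (measurableSet_le measurable_id measurable_const)
          · exact (measurable_id.const_mul β).exp.ennreal_ofReal
          · exact measurable_const
        have e : (fun x => F x y) = fun x => ENNReal.ofReal (Real.exp (β*y)) *
            (if x ≤ c - y then ENNReal.ofReal (Real.exp (β*x)) else 0) := by
          funext x
          by_cases hxy : x + y ≤ c
          · rw [hFdef]
            simp only
            rw [if_pos hxy, if_pos (by linarith : x ≤ c - y),
              ← ENNReal.ofReal_mul (Real.exp_pos _).le, ← Real.exp_add]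
            congr 2
            ring
          · rw [hFdef]
            simp only
            rw [if_neg hxy, if_neg (by linarith : ¬ x ≤ c - y), mul_zero]
        rw [e, lintegral_const_mul _ hmeas1]
        congr 1
        rw [lintegral_map hmeas1 (hSpmeas n)]
        exact ih (c - y)
      rw [lintegral_congr inner]
      have hmeas_h : Measurable (fun y : ℝ =>
          if 0 ≤ c - y then ENNReal.ofReal ((β*(c-y))^n / n.factorial) else 0) := by
        apply Measurable.ite (measurableSet_le measurable_const (by fun_prop))
        · fun_prop
        · exact measurable_const
      rw [expMeasure_lintegral_exp_mul hβ hmeas_h]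
      by_cases hc : 0 ≤ c
      · rw [if_pos hc]
        have e2 : (∫⁻ y in Set.Ici (0:ℝ),
              (if 0 ≤ c - y then ENNReal.ofReal ((β*(c-y))^n / n.factorial) else 0))
            = ∫⁻ y in Set.Icc 0 c, ENNReal.ofReal ((β*(c-y))^n / n.factorial) := by
          have hind : (fun y : ℝ =>
              if 0 ≤ c - y then ENNReal.ofReal ((β*(c-y))^n / n.factorial) else 0)
              = (Set.Iic c).indicator
                (fun y => ENNReal.ofReal ((β*(c-y))^n / n.factorial)) := by
            funext y
            by_cases hy : y ≤ c
            · simp [Set.indicator_apply, hy, sub_nonneg.2 hy]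
            · have h1 : ¬ (0 ≤ c - y) := fun h => hy (by linarith)
              simp [Set.indicator_apply, hy, h1]
          rw [hind, lintegral_indicator measurableSet_Iic,
            Measure.restrict_restrict measurableSet_Iic, Set.Iic_inter_Ici]
        rw [e2]
        have hcont : Continuous (fun y : ℝ => (β*(c-y))^n / n.factorial) := by
          fun_prop
        have hInt : IntegrableOn (fun y : ℝ => (β*(c-y))^n / n.factorial)
            (Set.Icc 0 c) := hcont.integrableOn_Icc
        have hnn : 0 ≤ᵐ[volume.restrict (Set.Icc 0 c)]
            (fun y : ℝ => (β*(c-y))^n / n.factorial) :=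
          (ae_restrict_iff' measurableSet_Icc).2 (ae_of_all _ fun y hy =>
            div_nonneg (pow_nonneg (mul_nonneg hβ.le (by linarith [hy.2])) n)
              (Nat.cast_nonneg _))
        rw [← ofReal_integral_eq_lintegral_ofReal hInt hnn,
          ← ENNReal.ofReal_mul hβ.le]
        congr 1
        rw [MeasureTheory.integral_Icc_eq_integral_Ioc, ← intervalIntegral.integral_of_le hc]
        have e3 : (∫ y in (0:ℝ)..c, (β*(c-y))^n / n.factorial)
            = (β^n / n.factorial) * ∫ y in (0:ℝ)..c, (c-y)^n := by
          rw [← intervalIntegral.integral_const_mul]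
          congr 1
          funext y
          rw [mul_pow]
          ring
        have e4 : (∫ y in (0:ℝ)..c, (c-y)^n) = c^(n+1)/(n+1) := by
          rw [intervalIntegral.integral_comp_sub_left (fun x => x^n) c]
          simp [integral_pow]
        rw [e3, e4]
        have hf0 : (n.factorial : ℝ) ≠ 0 := Nat.cast_ne_zero.2 n.factorial_ne_zero
        rw [mul_pow, Nat.factorial_succ]
        push_cast
        field_simp
        ring
      · rw [if_neg hc]
        have e5 : ∀ y ∈ Set.Ici (0:ℝ),
            (if 0 ≤ c - y then ENNReal.ofReal ((β*(c-y))^n / n.factorial) else 0) = 0 := by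
          intro y hy
          rw [if_neg]
          intro h
          rw [Set.mem_Ici] at hy
          exact hc (by linarith)
        rw [setLIntegral_congr_fun measurableSet_Ici e5, lintegral_zero, mul_zero]
  -- mgf of jump partial sums
  have hgm : Measurable (fun x : ℝ => ENNReal.ofReal (Real.exp (q*x))) :=
    (measurable_id.const_mul q).exp.ennreal_ofReal
  have hKmgf : ∀ n, ∫⁻ ω, ENNReal.ofReal (Real.exp (q * Kp n ω)) ∂μ
      = ENNReal.ofReal (m' ^ n) := by
    intro n
    induction n with
    | zero =>
      have h0 : ∀ ω : Ω, Kp 0 ω = 0 := fun ω => by simp [hKpdef]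
      have e : (fun ω => ENNReal.ofReal (Real.exp (q * Kp 0 ω))) = fun _ω => (1:ℝ≥0∞) := by
        funext ω; rw [h0 ω]; simp
      rw [lintegral_congr (fun ω => congrFun e ω), lintegral_const, measure_univ, mul_one,
        pow_zero, ENNReal.ofReal_one]
    | succ n ih =>
      have hstep : ∀ ω, Kp (n+1) ω = Kp n ω + J' n ω := fun ω => Finset.sum_range_succ _ _
      have l1 : (∫⁻ ω, ENNReal.ofReal (Real.exp (q * Kp (n+1) ω)) ∂μ)
          = ∫⁻ ω, ENNReal.ofReal (Real.exp (q * Kp n ω))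
              * ENNReal.ofReal (Real.exp (q * J' n ω)) ∂μ :=
        lintegral_congr fun ω => by
          rw [hstep ω, mul_add, Real.exp_add, ENNReal.ofReal_mul (Real.exp_pos _).le]
      have hInd : IndepFun (fun ω => ENNReal.ofReal (Real.exp (q * Kp n ω)))
          (fun ω => ENNReal.ofReal (Real.exp (q * J' n ω))) μ := (I2 n).comp hgm hgm
      rw [l1, lintegral_mul_eq_lintegral_mul_lintegral_of_indepFun''
        (f := fun ω => ENNReal.ofReal (Real.exp (q * Kp n ω)))
        (g := fun ω => ENNReal.ofReal (Real.exp (q * J' n ω)))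
        ((hgm.comp (hKpmeas n)).aemeasurable) ((hgm.comp (hJ'meas n)).aemeasurable) hInd, ih]
      have hsingle : (∫⁻ ω, ENNReal.ofReal (Real.exp (q * J' n ω)) ∂μ)
          = ENNReal.ofReal m' := by
        rw [← lintegral_map hgm (hJ'meas n), hJ'law n, expMeasure_mgf hT hqT, hm'def]
      rw [hsingle, ← ENNReal.ofReal_mul (pow_nonneg hm'pos.le n), ← pow_succ]
  -- a.s. positivity and non-explosion
  have aepos : ∀ᵐ ω ∂μ, ∀ i, 0 < E' i ω := by
    refine ae_all_iff.2 fun i => ?_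
    have h0 : μ {ω | ¬ (0 < E' i ω)} = 0 := by
      have hset : {ω | ¬ 0 < E' i ω} = E' i ⁻¹' (Set.Iic 0) := by
        ext ω; simp [not_lt]
      rw [hset, ← Measure.map_apply (hE'meas i) measurableSet_Iic, hE'law i,
        show expMeasure β = volume.withDensity (exponentialPDF β) from rfl,
        withDensity_apply _ measurableSet_Iic]
      simpa using lintegral_exponentialPDF_eq_antiDeriv hβ 0
    exact (ae_iff).2 h0
  set B : Set Ω := ⋂ n, {ω | Sp n ω ≤ t} with hBdef
  have hB0 : μ B = 0 := by
    have hb : ∀ n, μ B ≤ ENNReal.ofReal ((β*t)^n / n.factorial) := by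
      intro n
      refine le_trans (measure_mono (Set.iInter_subset _ n)) ?_
      have h1 : μ {ω | Sp n ω ≤ t}
          = ∫⁻ ω, ({ω | Sp n ω ≤ t}).indicator (fun _ => (1:ℝ≥0∞)) ω ∂μ :=
        (lintegral_indicator_one (measurableSet_le (hSpmeas n) measurable_const)).symm
      rw [h1]
      have h2 : ∀ᵐ ω ∂μ, ({ω | Sp n ω ≤ t}).indicator (fun _ => (1:ℝ≥0∞)) ω
          ≤ (if Sp n ω ≤ t then ENNReal.ofReal (Real.exp (β * Sp n ω)) else 0) := by
        filter_upwards [aepos] with ω hω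
        rw [Set.indicator_apply]
        by_cases hs : Sp n ω ≤ t
        · rw [if_pos (by exact hs), if_pos hs]
          refine ENNReal.one_le_ofReal.2 (Real.one_le_exp ?_)
          exact mul_nonneg hβ.le (Finset.sum_nonneg fun i _ => (hω i).le)
        · rw [if_neg (by exact hs), if_neg hs]
      refine le_trans (lintegral_mono_ae h2) ?_
      rw [hG n t, if_pos ht.le]
    have htend : Filter.Tendsto (fun n => ENNReal.ofReal ((β*t)^n / n.factorial))
        Filter.atTop (nhds 0) := by
      have h0 := FloorSemiring.tendsto_pow_div_factorial_atTop (K := ℝ) (β*t)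
      simpa using ENNReal.tendsto_ofReal h0
    exact le_antisymm (ge_of_tendsto htend (Filter.Eventually.of_forall hb)) zero_le
  -- conull set W
  have hWae : ∀ᵐ ω ∂μ, ((∀ i, E i ω = E' i ω) ∧ (∀ i, J i ω = J' i ω)
      ∧ (∀ i, 0 < E' i ω) ∧ ω ∉ B) := by
    have h1 : ∀ᵐ ω ∂μ, ∀ i, E i ω = E' i ω := ae_all_iff.2 hEE'
    have h2 : ∀ᵐ ω ∂μ, ∀ i, J i ω = J' i ω := ae_all_iff.2 hJJ'
    have h4 : ∀ᵐ ω ∂μ, ω ∉ B := by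
      rw [ae_iff]
      simpa using hB0
    filter_upwards [h1, h2, aepos, h4] with ω a b c d
    exact ⟨a, b, c, d⟩
  set W : Set Ω := {ω | (∀ i, E i ω = E' i ω) ∧ (∀ i, J i ω = J' i ω)
      ∧ (∀ i, 0 < E' i ω) ∧ ω ∉ B} with hWdef
  have hWc : μ Wᶜ = 0 := by
    rw [ae_iff] at hWae
    simpa [hWdef, Set.compl_setOf] using hWae
  set Ev : Set Ω := {ω | ∀ s ∈ Set.Icc (0:ℝ) t, |cppX E J s ω - A * s| < δ} with hEvdef
  set An : ℕ → Set Ω := fun n => {ω | Sp n ω ≤ t ∧ t < Sp (n+1) ω} with hAndef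
  have hAnmeas : ∀ n, MeasurableSet (An n) := fun n =>
    (measurableSet_le (hSpmeas n) measurable_const).inter
      (measurableSet_lt measurable_const (hSpmeas (n+1)))
  -- value of cppX on An ∩ W
  have hXval : ∀ n, ∀ ω, ω ∈ W → ω ∈ An n → cppX E J t ω = Kp n ω := by
    intro n ω hW hAn
    obtain ⟨hEeq, hJeq, hpos, -⟩ := hW
    have hmono : ∀ {k l : ℕ}, k ≤ l → Sp k ω ≤ Sp l ω := by
      intro k l hkl
      refine Finset.sum_le_sum_of_subset_of_nonneg (by
        intro i hi
        rw [Finset.mem_range] at hi ⊢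
        omega) ?_
      exact fun i _ _ => (hpos i).le
    have hcond : ∀ i : ℕ, ((∑ k ∈ Finset.range (i+1), E k ω) ≤ t ↔ i < n) := by
      intro i
      have hsum : (∑ k ∈ Finset.range (i+1), E k ω) = Sp (i+1) ω :=
        Finset.sum_congr rfl (fun k _ => hEeq k)
      rw [hsum]
      constructor
      · intro hle
        by_contra hni
        push_neg at hni
        exact absurd (le_trans (hmono (Nat.succ_le_succ hni)) hle) (not_le.2 hAn.2)
      · intro hin
        exact le_trans (hmono (Nat.succ_le_of_lt hin)) hAn.1
    calc cppX E J t ω = ∑' i, if i < n then J' i ω else 0 := by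
          refine tsum_congr fun i => ?_
          exact if_congr (hcond i) (hJeq i) rfl
      _ = ∑ i ∈ Finset.range n, (if i < n then J' i ω else 0) := by
          refine tsum_eq_sum ?_
          intro b hb
          exact if_neg (fun h => hb (Finset.mem_range.2 h))
      _ = Kp n ω := Finset.sum_congr rfl fun i hi => if_pos (Finset.mem_range.1 hi)
  -- covering
  have hcover : ∀ ω, ω ∈ W → ∃ n, ω ∈ An n := by
    intro ω hW
    obtain ⟨-, -, hpos, hnB⟩ := hW
    have hex : ∃ m, t < Sp m ω := by
      by_contra hcon
      push_neg at hcon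
      exact hnB (Set.mem_iInter.2 fun n => hcon n)
    have hn0pos : Nat.find hex ≠ 0 := by
      intro h0
      have hspec := Nat.find_spec hex
      rw [h0] at hspec
      have : Sp 0 ω = 0 := by simp [hSpdef]
      rw [this] at hspec
      linarith
    obtain ⟨n, hn⟩ := Nat.exists_eq_succ_of_ne_zero hn0pos
    refine ⟨n, ?_, ?_⟩
    · exact not_lt.1 (Nat.find_min hex (by omega))
    · have hspec := Nat.find_spec hex
      rwa [hn] at hspec
  -- Chernoff pieces
  set rr : ℝ := q * (A*t) - |q| * δ with hrrdef
  set cV : ℝ≥0∞ := ENNReal.ofReal (Real.exp rr) with hcVdef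
  set fn : ℕ → Ω → ℝ≥0∞ := fun n ω => ENNReal.ofReal (Real.exp (q * Kp n ω)) with hfndef
  have hfnmeas : ∀ n, Measurable (fn n) := fun n =>
    ((hKpmeas n).const_mul q).exp.ennreal_ofReal
  set Bn : ℕ → Set Ω := fun n => An n ∩ {ω | cV ≤ fn n ω} with hBndef
  have hsub : Ev ∩ W ⊆ ⋃ n, Bn n := by
    rintro ω ⟨hEv, hW⟩
    obtain ⟨n, hn⟩ := hcover ω hW
    refine Set.mem_iUnion.2 ⟨n, hn, ?_⟩
    have habs : |cppX E J t ω - A * t| < δ := hEv t ⟨ht.le, le_refl t⟩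
    rw [hXval n ω hW hn] at habs
    have h1 : |q * (Kp n ω - A*t)| ≤ |q| * δ := by
      rw [abs_mul]
      exact mul_le_mul_of_nonneg_left habs.le (abs_nonneg q)
    have h2 : rr ≤ q * Kp n ω := by
      have h3 := neg_abs_le (q * (Kp n ω - A*t))
      rw [hrrdef]
      nlinarith [abs_nonneg q]
    exact ENNReal.ofReal_le_ofReal (Real.exp_le_exp.2 h2)
  -- Markov on each piece
  have hpiece : ∀ n, cV * μ (Bn n) ≤ ∫⁻ ω in An n, fn n ω ∂μ := by
    intro n
    calc cV * μ (Bn n) = ∫⁻ _ω in Bn n, cV ∂μ := by rw [setLIntegral_const]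
      _ ≤ ∫⁻ ω in Bn n, fn n ω ∂μ := setLIntegral_mono (hfnmeas n) fun ω hω => hω.2
      _ ≤ ∫⁻ ω in An n, fn n ω ∂μ :=
          lintegral_mono' (Measure.restrict_mono Set.inter_subset_left le_rfl) le_rfl
  -- evaluation on An
  have hmeascut : Measurable (fun x : ℝ =>
      if x ≤ t then ENNReal.ofReal (Real.exp (β*x)) else 0) := by
    apply Measurable.ite (measurableSet_le measurable_id measurable_const)
    · exact (measurable_id.const_mul β).exp.ennreal_ofReal
    · exact measurable_const
  have hval : ∀ n, (∫⁻ ω in An n, fn n ω ∂μ)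
      = (ENNReal.ofReal (Real.exp (-(β*t))) * ENNReal.ofReal ((β*t)^n / n.factorial))
        * ENNReal.ofReal (m'^n) := by
    intro n
    have l0 : (∫⁻ ω in An n, fn n ω ∂μ) = ∫⁻ ω, (An n).indicator (fn n) ω ∂μ :=
      (lintegral_indicator (hAnmeas n) _).symm
    set F2 : ℝ → ℝ → ℝ≥0∞ := fun x y => if x ≤ t ∧ t < x + y then 1 else 0 with hF2def
    have hF2meas : Measurable (Function.uncurry F2) := by
      apply Measurable.ite ?_ measurable_const measurable_const
      exact (measurableSet_le measurable_fst measurable_const).inter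
        (measurableSet_lt measurable_const (measurable_fst.add measurable_snd))
    have l1 : (fun ω => (An n).indicator (fn n) ω)
        = fun ω => F2 (Sp n ω) (E' n ω) * fn n ω := by
      funext ω
      have hs : Sp n ω + E' n ω = Sp (n+1) ω := (Finset.sum_range_succ _ _).symm
      rw [Set.indicator_apply]
      by_cases hω : ω ∈ An n
      · rw [if_pos hω, hF2def]
        simp only
        rw [if_pos ⟨hω.1, hs ▸ hω.2⟩, one_mul]
      · rw [if_neg hω, hF2def]
        simp only
        rw [if_neg (fun hcon => hω ⟨hcon.1, hs ▸ hcon.2⟩), zero_mul]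
    have hInd3 : IndepFun (fun ω => F2 (Sp n ω) (E' n ω)) (fn n) μ := by
      have h0 := (I3 n).comp hF2meas hgm
      exact h0
    have hsplit : (∫⁻ ω, F2 (Sp n ω) (E' n ω) * fn n ω ∂μ)
        = (∫⁻ ω, F2 (Sp n ω) (E' n ω) ∂μ) * ∫⁻ ω, fn n ω ∂μ := by
      refine lintegral_mul_eq_lintegral_mul_lintegral_of_indepFun''
        (f := fun ω => F2 (Sp n ω) (E' n ω)) (g := fn n)
        ((hF2meas.comp ((hSpmeas n).prodMk (hE'meas n))).aemeasurable)
        ((hfnmeas n).aemeasurable) hInd3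
    have hF2int : (∫⁻ ω, F2 (Sp n ω) (E' n ω) ∂μ)
        = ENNReal.ofReal (Real.exp (-(β*t))) * ENNReal.ofReal ((β*t)^n / n.factorial) := by
      rw [pairlaw n F2 hF2meas]
      have inner : ∀ x : ℝ, (∫⁻ y, F2 x y ∂(expMeasure β))
          = if x ≤ t then ENNReal.ofReal (Real.exp (-(β*(t-x)))) else 0 := by
        intro x
        by_cases hx : x ≤ t
        · rw [if_pos hx]
          have e : (fun y => F2 x y) = (Set.Ioi (t - x)).indicator 1 := by
            funext y
            rw [hF2def, Set.indicator_apply]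
            simp only [Set.mem_Ioi, Pi.one_apply]
            by_cases hy : t - x < y
            · rw [if_pos ⟨hx, by linarith⟩, if_pos hy]
            · rw [if_neg (fun hcon => hy (by linarith [hcon.2])), if_neg hy]
          rw [e, lintegral_indicator_one measurableSet_Ioi,
            expMeasure_Ioi hβ (by linarith : (0:ℝ) ≤ t - x)]
        · rw [if_neg hx]
          have e : (fun y => F2 x y) = fun _ => 0 := by
            funext y
            rw [hF2def]
            simp only
            exact if_neg (fun hcon => hx hcon.1)
          rw [e, lintegral_zero]
      rw [lintegral_congr inner]
      have e2 : (fun x : ℝ => if x ≤ t then ENNReal.ofReal (Real.exp (-(β*(t-x)))) else 0)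
          = fun x => ENNReal.ofReal (Real.exp (-(β*t)))
            * (if x ≤ t then ENNReal.ofReal (Real.exp (β*x)) else 0) := by
        funext x
        by_cases hx : x ≤ t
        · rw [if_pos hx, if_pos hx, ← ENNReal.ofReal_mul (Real.exp_pos _).le,
            ← Real.exp_add]
          congr 2
          ring
        · rw [if_neg hx, if_neg hx, mul_zero]
      rw [e2, lintegral_const_mul _ hmeascut]
      congr 1
      rw [lintegral_map hmeascut (hSpmeas n), hG n t, if_pos ht.le]
    rw [l0, lintegral_congr (fun ω => congrFun l1 ω), hsplit, hF2int, hKmgf n]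
  -- total series
  have htot : (∑' n : ℕ, ((ENNReal.ofReal (Real.exp (-(β*t)))
        * ENNReal.ofReal ((β*t)^n / n.factorial)) * ENNReal.ofReal (m'^n)))
      = ENNReal.ofReal (Real.exp (β*t*(m'-1))) := by
    have e1 : ∀ n : ℕ, ((ENNReal.ofReal (Real.exp (-(β*t)))
          * ENNReal.ofReal ((β*t)^n / n.factorial)) * ENNReal.ofReal (m'^n))
        = ENNReal.ofReal (Real.exp (-(β*t))) * ENNReal.ofReal ((β*t*m')^n / n.factorial) := by
      intro n
      rw [mul_assoc, ← ENNReal.ofReal_mul (by positivity)]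
      congr 2
      rw [mul_pow]
      ring
    rw [tsum_congr e1, ENNReal.tsum_mul_left,
      ← ENNReal.ofReal_tsum_of_nonneg (fun n => by positivity)
        (Real.summable_pow_div_factorial _)]
    have e3 : (∑' n : ℕ, (β*t*m')^n / n.factorial) = Real.exp (β*t*m') := by
      rw [Real.exp_eq_exp_ℝ]
      exact (NormedSpace.expSeries_div_hasSum_exp (β*t*m')).tsum_eq
    rw [e3, ← ENNReal.ofReal_mul (Real.exp_pos _).le, ← Real.exp_add]
    congr 1
    ring
  -- assembling the bound
  have hmain : cV * μ Ev ≤ ENNReal.ofReal (Real.exp (β*t*(m'-1))) := by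
    have s1 : μ Ev ≤ μ (Ev ∩ W) := by
      have hsub2 : Ev ⊆ (Ev ∩ W) ∪ Wᶜ := by
        intro ω hω
        by_cases h : ω ∈ W
        · exact Or.inl ⟨hω, h⟩
        · exact Or.inr h
      calc μ Ev ≤ μ ((Ev ∩ W) ∪ Wᶜ) := measure_mono hsub2
        _ ≤ μ (Ev ∩ W) + μ Wᶜ := measure_union_le _ _
        _ = μ (Ev ∩ W) := by rw [hWc, add_zero]
    have s2 : μ (Ev ∩ W) ≤ ∑' n, μ (Bn n) :=
      le_trans (measure_mono hsub) (measure_iUnion_le _)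
    calc cV * μ Ev ≤ cV * ∑' n, μ (Bn n) := mul_le_mul_right (s1.trans s2) cV
      _ = ∑' n, cV * μ (Bn n) := ENNReal.tsum_mul_left.symm
      _ ≤ ∑' n, ∫⁻ ω in An n, fn n ω ∂μ := ENNReal.tsum_le_tsum hpiece
      _ = ∑' n : ℕ, ((ENNReal.ofReal (Real.exp (-(β*t)))
            * ENNReal.ofReal ((β*t)^n / n.factorial)) * ENNReal.ofReal (m'^n)) :=
          tsum_congr hval
      _ = ENNReal.ofReal (Real.exp (β*t*(m'-1))) := htot
  have hc1 : ENNReal.ofReal (Real.exp (-rr)) * cV = 1 := by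
    rw [hcVdef, ← ENNReal.ofReal_mul (Real.exp_pos _).le, ← Real.exp_add,
      neg_add_cancel, Real.exp_zero, ENNReal.ofReal_one]
  calc μ Ev = (ENNReal.ofReal (Real.exp (-rr)) * cV) * μ Ev := by rw [hc1, one_mul]
    _ = ENNReal.ofReal (Real.exp (-rr)) * (cV * μ Ev) := by rw [mul_assoc]
    _ ≤ ENNReal.ofReal (Real.exp (-rr)) * ENNReal.ofReal (Real.exp (β*t*(m'-1))) :=
        mul_le_mul_right hmain _
    _ = ENNReal.ofReal (Real.exp (β*t*(m'-1) - rr)) := by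
        rw [← ENNReal.ofReal_mul (Real.exp_pos _).le, ← Real.exp_add]
        congr 1
        ring
    _ = ENNReal.ofReal (Real.exp (-(t * T * (Real.sqrt R - Real.sqrt A) ^ 2)
          + δ * |1 - Real.sqrt (R / A)| * T)) := by
        have key : β*t*(m'-1) - rr
            = -(t * T * (Real.sqrt R - Real.sqrt A) ^ 2)
              + δ * |1 - Real.sqrt (R / A)| * T := by
          rw [hrrdef, hβdef, hm'def, hqdef]
          exact tilt_algebra hR0 hA hT
        rw [key]
end

section
/- Under the same self-centering assumptions (Δ_{j−1}·E[2D_{j−1}−1|𝒢_{j−1}] ≤ 0, increments (2D_{j−1}−1)E_{j−1} with E_{j−1} ~ Exp(1) independent of D_{j−1} and 𝒢_{j−1}), one has E[Δ_j⁴] ≤ 12j(j+1) for all j ≥ 0. -/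
open MeasureTheory ProbabilityTheory Real Set
open scoped ENNReal NNReal

lemma expPDFReal_one (x : ℝ) :
    exponentialPDFReal 1 x = (Ici (0:ℝ)).indicator (fun x => Real.exp (-x)) x := by
  simp only [exponentialPDFReal, gammaPDFReal, indicator, mem_Ici]
  split_ifs with h
  · simp [Real.Gamma_one]
  · rfl

lemma expMeasure_one_eq : expMeasure 1 =
    volume.withDensity (fun x => ((exponentialPDFReal 1 x).toNNReal : ℝ≥0∞)) := rfl

lemma exp_density_smul (n : ℕ) : (fun x : ℝ => (exponentialPDFReal 1 x).toNNReal • x ^ n)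
      = (Ici (0:ℝ)).indicator (fun x => Real.exp (-x) * x ^ n) := by
  funext x
  simp only [expPDFReal_one, indicator, mem_Ici, NNReal.smul_def, smul_eq_mul]
  split_ifs with h
  · rw [Real.coe_toNNReal _ (Real.exp_pos _).le]
  · simp

lemma exp_integrableOn (n : ℕ) :
    IntegrableOn (fun x : ℝ => Real.exp (-x) * x ^ n) (Ici (0:ℝ)) := by
  rw [integrableOn_Ici_iff_integrableOn_Ioi]
  have h := integrableOn_rpow_mul_exp_neg_rpow (p := 1) (s := n)
    (lt_of_lt_of_le (by norm_num) (Nat.cast_nonneg n)) one_pos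
  refine h.congr_fun (fun x hx => ?_) measurableSet_Ioi
  beta_reduce
  rw [Real.rpow_one, Real.rpow_natCast, mul_comm]

lemma exp_integrable (n : ℕ) : Integrable (fun x : ℝ => x ^ n) (expMeasure 1) := by
  rw [expMeasure_one_eq,
    integrable_withDensity_iff_integrable_smul ((measurable_exponentialPDFReal 1).real_toNNReal)]
  rw [exp_density_smul]
  exact (exp_integrableOn n).integrable_indicator measurableSet_Ici

lemma exp_moment (n : ℕ) : ∫ x, x ^ n ∂(expMeasure 1) = n.factorial := by
  rw [expMeasure_one_eq,
    integral_withDensity_eq_integral_smul ((measurable_exponentialPDFReal 1).real_toNNReal)]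
  rw [exp_density_smul, integral_indicator measurableSet_Ici, integral_Ici_eq_integral_Ioi]
  have key := integral_rpow_mul_exp_neg_mul_Ioi (a := (n:ℝ) + 1) (r := 1) (by positivity) one_pos
  rw [show ((n:ℝ) + 1 - 1) = (n:ℝ) by ring] at key
  have : ∫ x in Ioi (0:ℝ), Real.exp (-x) * x ^ n
      = ∫ t in Ioi (0:ℝ), t ^ (n:ℝ) * Real.exp (-(1 * t)) := by
    refine setIntegral_congr_fun measurableSet_Ioi (fun x hx => ?_)
    rw [Real.rpow_natCast, one_mul, mul_comm]
  rw [this, key, one_div_one, Real.one_rpow, one_mul, Real.Gamma_nat_eq_factorial]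

lemma memLp_four_of_integrable_pow {α : Type*} [MeasurableSpace α] {ν : Measure α} {f : α → ℝ}
    (hm : AEStronglyMeasurable f ν) (h : Integrable (fun x => f x ^ 4) ν) : MemLp f 4 ν := by
  rw [← memLp_norm_rpow_iff (q := 4) hm (by norm_num) (by norm_num),
    ENNReal.div_self (by norm_num) (by norm_num), memLp_one_iff_integrable]
  refine h.congr (Filter.Eventually.of_forall fun x => ?_)
  have h4 : ((4:ℝ≥0∞)).toReal = ((4:ℕ):ℝ) := by norm_num
  simp only [h4, Real.rpow_natCast, Real.norm_eq_abs]
  rw [← abs_pow]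
  exact (abs_of_nonneg (by positivity)).symm

lemma integrable_pow_of_memLp4 {α : Type*} [MeasurableSpace α] {ν : Measure α} [IsFiniteMeasure ν]
    {f : α → ℝ} (hf : MemLp f 4 ν) (k : ℕ) (hk : k ≤ 4) :
    Integrable (fun x => f x ^ k) ν := by
  rcases Nat.eq_zero_or_pos k with rfl | hk0
  · simpa using integrable_const (1:ℝ)
  have hmem : MemLp f k ν := hf.mono_exponent (by exact_mod_cast Nat.cast_le.mpr hk)
  have h := hmem.integrable_norm_rpow (by exact_mod_cast hk0.ne') (by simp)
  refine h.mono' (hf.aestronglyMeasurable.aemeasurable.pow_const k).aestronglyMeasurable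
    (Filter.Eventually.of_forall fun x => ?_)
  rw [ENNReal.toReal_natCast, Real.rpow_natCast]
  exact le_of_eq (norm_pow _ _)

/-- Fourth moment bound for a self-centering random walk with exponential step sizes:
if `Δ_0 = 0`, `Δ_{j+1} = Δ_j + (2D_j − 1)E_j` with `D_j ∈ {0,1}`, `E_j ~ Exp(1)` independent
of the past and of `D_j`, and the drift always opposes `Δ_j`
(`Δ_j·E[2D_j − 1 | 𝒢_j] ≤ 0` a.s.), then `E[Δ_j⁴] ≤ 12j(j+1)` for all `j`. -/
theorem selfCentering_fourth_moment {Ω : Type*} {m0 : MeasurableSpace Ω} (μ : Measure Ω)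
    [IsProbabilityMeasure μ] (𝒢 : Filtration ℕ m0)
    (Δ D E : ℕ → Ω → ℝ)
    (hΔ0 : ∀ ω, Δ 0 ω = 0)
    (hrec : ∀ j ω, Δ (j + 1) ω = Δ j ω + (2 * D j ω - 1) * E j ω)
    (hD01 : ∀ j ω, D j ω = 0 ∨ D j ω = 1)
    (hΔadapted : ∀ j, Measurable[𝒢 j] (Δ j))
    (hDmeas : ∀ j, Measurable[𝒢 (j + 1)] (D j))
    (hEdist : ∀ j, μ.map (E j) = expMeasure 1)
    (hEindep : ∀ j, Indep (MeasurableSpace.comap (E j) (inferInstance : MeasurableSpace ℝ))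
      (𝒢 j ⊔ MeasurableSpace.comap (D j) (inferInstance : MeasurableSpace ℝ)) μ)
    (hsign : ∀ j, ∀ᵐ ω ∂μ, Δ j ω * (μ[(fun ω' => 2 * D j ω' - 1) | 𝒢 j]) ω ≤ 0) :
    ∀ j : ℕ, ∫ ω, (Δ j ω) ^ 4 ∂μ ≤ 12 * j * (j + 1) := by
  haveI hprob : IsProbabilityMeasure (expMeasure 1) := isProbabilityMeasure_expMeasure one_pos
  -- E j is AEMeasurable
  have hEae : ∀ j, AEMeasurable (E j) μ := by
    intro j
    by_contra h
    have h0 := hEdist j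
    rw [Measure.map_of_not_aemeasurable h] at h0
    have h1 := measure_univ (μ := expMeasure 1)
    rw [← h0] at h1
    simp at h1
  -- moments of E j
  have hEint : ∀ j n, Integrable (fun ω => E j ω ^ n) μ := by
    intro j n
    have h : Integrable (fun x : ℝ => x ^ n) (μ.map (E j)) := by
      rw [hEdist j]; exact exp_integrable n
    exact (integrable_map_measure (measurable_id.pow_const n).aestronglyMeasurable
      (hEae j)).mp h
  have hEval : ∀ j n, ∫ ω, E j ω ^ n ∂μ = (n.factorial : ℝ) := by
    intro j n
    have h : ∫ x, x ^ n ∂(μ.map (E j)) = (n.factorial : ℝ) := by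
      rw [hEdist j]; exact exp_moment n
    have hg : AEStronglyMeasurable (fun x : ℝ => x ^ n) (μ.map (E j)) :=
      (measurable_id.pow_const n).aestronglyMeasurable
    rwa [integral_map (hEae j) hg] at h
  -- basic facts about S := 2D - 1
  have hSsq : ∀ j ω, (2 * D j ω - 1) ^ 2 = 1 := by
    intro j ω
    rcases hD01 j ω with h | h <;> rw [h] <;> norm_num
  have hSm0 : ∀ j, Measurable (fun ω => 2 * D j ω - 1) := fun j =>
    (measurable_const.mul ((hDmeas j).mono (𝒢.le (j+1)) le_rfl)).sub measurable_const
  have hΔm0 : ∀ j, Measurable (Δ j) := fun j => (hΔadapted j).mono (𝒢.le j) le_rfl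
  -- measurability w.r.t. 𝒢 j ⊔ comap (D j)
  have hSup : ∀ j (k : ℕ),
      Measurable[𝒢 j ⊔ MeasurableSpace.comap (D j) (inferInstance : MeasurableSpace ℝ)]
        (fun ω => Δ j ω ^ k * (2 * D j ω - 1)) := by
    intro j k
    have hD' : Measurable[(𝒢 j : MeasurableSpace Ω) ⊔
        MeasurableSpace.comap (D j) (inferInstance : MeasurableSpace ℝ)]
        (D j) := (measurable_iff_comap_le.mpr le_rfl).mono le_sup_right le_rfl
    exact (((hΔadapted j).mono le_sup_left le_rfl).pow_const k).mul
      ((measurable_const.mul hD').sub measurable_const)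
  have hΔsup : ∀ j (k : ℕ),
      Measurable[𝒢 j ⊔ MeasurableSpace.comap (D j) (inferInstance : MeasurableSpace ℝ)]
        (fun ω => Δ j ω ^ k) :=
    fun j k => ((hΔadapted j).mono le_sup_left le_rfl).pow_const k
  -- independence of E j ^ n from (Δ j, D j)-measurable functions
  have hIndep : ∀ j (n : ℕ) (X : Ω → ℝ),
      Measurable[𝒢 j ⊔ MeasurableSpace.comap (D j) (inferInstance : MeasurableSpace ℝ)] X →
      IndepFun X (fun ω => E j ω ^ n) μ := by
    intro j n X hX
    rw [IndepFun_iff_Indep]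
    refine (indep_of_indep_of_le_right (indep_of_indep_of_le_left (hEindep j) ?_)
      (measurable_iff_comap_le.mp hX)).symm
    exact measurable_iff_comap_le.mp
      ((measurable_id.pow_const n).comp (measurable_iff_comap_le.mpr le_rfl))
  -- fourth moment membership of Δ j
  have hΔmem : ∀ j, MemLp (Δ j) 4 μ := by
    intro j
    induction j with
    | zero =>
      have h : Δ 0 = fun _ => (0:ℝ) := funext hΔ0
      rw [h]; exact memLp_const 0
    | succ j ih =>
      have h : Δ (j+1) = fun ω => Δ j ω + (2 * D j ω - 1) * E j ω := funext (hrec j)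
      rw [h]
      refine MemLp.add ih ?_
      have hE4 : MemLp (E j) 4 μ := by
        have h4 : MemLp (id : ℝ → ℝ) 4 (μ.map (E j)) := by
          rw [hEdist j]
          exact memLp_four_of_integrable_pow aestronglyMeasurable_id (exp_integrable 4)
        exact (memLp_map_measure_iff aestronglyMeasurable_id (hEae j)).mp h4
      refine hE4.of_le ((hSm0 j).aemeasurable.mul (hEae j)).aestronglyMeasurable
        (Filter.Eventually.of_forall fun ω => ?_)
      rcases hD01 j ω with hd | hd <;>
        simp [hd, Real.norm_eq_abs, abs_mul] <;> norm_num
  -- integrability of Δ j ^ k and products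
  have hΔint : ∀ j (k : ℕ), k ≤ 4 → Integrable (fun ω => Δ j ω ^ k) μ :=
    fun j k hk => integrable_pow_of_memLp4 (hΔmem j) k hk
  have hXint : ∀ j (k : ℕ), k ≤ 4 → Integrable (fun ω => Δ j ω ^ k * (2 * D j ω - 1)) μ := by
    intro j k hk
    refine (hΔint j k hk).norm.mono'
      (((hΔm0 j).pow_const k).mul (hSm0 j)).aestronglyMeasurable
      (Filter.Eventually.of_forall fun ω => ?_)
    rcases hD01 j ω with hd | hd <;> simp [hd, Real.norm_eq_abs, abs_mul] <;> norm_num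
  -- sign of odd mixed moments
  have hsgn : ∀ j (k : ℕ), Odd k → k ≤ 4 →
      ∫ ω, Δ j ω ^ k * (2 * D j ω - 1) ∂μ ≤ 0 := by
    intro j k hkodd hk
    have hgmeas : Measurable (fun ω' => 2 * D j ω' - 1) := hSm0 j
    have hgint : Integrable (fun ω' => 2 * D j ω' - 1) μ := by
      refine (integrable_const (1:ℝ)).mono' hgmeas.aestronglyMeasurable
        (Filter.Eventually.of_forall fun ω => ?_)
      rcases hD01 j ω with hd | hd <;> simp [hd] <;> norm_num
    have hfmeas : StronglyMeasurable[𝒢 j] (fun ω => Δ j ω ^ k) :=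
      ((hΔadapted j).pow_const k).stronglyMeasurable
    have hfg : Integrable ((fun ω => Δ j ω ^ k) * (fun ω' => 2 * D j ω' - 1)) μ :=
      hXint j k hk
    have hmul := condExp_mul_of_stronglyMeasurable_left hfmeas hfg hgint
    have heq : ∫ ω, Δ j ω ^ k * (2 * D j ω - 1) ∂μ
        = ∫ ω, ((fun ω => Δ j ω ^ k) * (fun ω' => 2 * D j ω' - 1)) ω ∂μ := rfl
    rw [heq, ← integral_condExp (𝒢.le j)
      (f := (fun ω => Δ j ω ^ k) * (fun ω' => 2 * D j ω' - 1)), integral_congr_ae hmul]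
    refine integral_nonpos_of_ae ?_
    filter_upwards [hsign j] with ω hω
    obtain ⟨m, hm⟩ := hkodd
    show (fun ω => Δ j ω ^ k) ω * (μ[fun ω' => 2 * D j ω' - 1|𝒢 j]) ω ≤ 0
    have hrw : (fun ω => Δ j ω ^ k) ω * (μ[fun ω' => 2 * D j ω' - 1|𝒢 j]) ω
        = (Δ j ω ^ m) ^ 2 * (Δ j ω * (μ[fun ω' => 2 * D j ω' - 1|𝒢 j]) ω) := by
      simp only [hm]; ring
    rw [hrw]
    exact mul_nonpos_of_nonneg_of_nonpos (sq_nonneg _) hω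
  -- product formulas with E ^ n
  have hprod : ∀ j (k n : ℕ), k ≤ 4 →
      Integrable (fun ω => Δ j ω ^ k * (2 * D j ω - 1) * E j ω ^ n) μ ∧
      ∫ ω, Δ j ω ^ k * (2 * D j ω - 1) * E j ω ^ n ∂μ
        = (∫ ω, Δ j ω ^ k * (2 * D j ω - 1) ∂μ) * (n.factorial : ℝ) := by
    intro j k n hk
    have hind := hIndep j n _ (hSup j k)
    refine ⟨hind.integrable_mul (hXint j k hk) (hEint j n), ?_⟩
    have h := hind.integral_mul_eq_mul_integral (hXint j k hk).aestronglyMeasurable (hEint j n).aestronglyMeasurable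
    exact h.trans (by rw [hEval j n])
  have hprodP : ∀ j (k n : ℕ), k ≤ 4 →
      Integrable (fun ω => Δ j ω ^ k * E j ω ^ n) μ ∧
      ∫ ω, Δ j ω ^ k * E j ω ^ n ∂μ = (∫ ω, Δ j ω ^ k ∂μ) * (n.factorial : ℝ) := by
    intro j k n hk
    have hind := hIndep j n _ (hΔsup j k)
    refine ⟨hind.integrable_mul (hΔint j k hk) (hEint j n), ?_⟩
    have h := hind.integral_mul_eq_mul_integral (hΔint j k hk).aestronglyMeasurable (hEint j n).aestronglyMeasurable
    exact h.trans (by rw [hEval j n])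
  -- second moment bound
  have h2 : ∀ j : ℕ, ∫ ω, Δ j ω ^ 2 ∂μ ≤ 2 * j := by
    intro j
    induction j with
    | zero => simp [hΔ0]
    | succ j ih =>
      have hpt : ∀ ω, Δ (j+1) ω ^ 2
          = Δ j ω ^ 2 + 2 * (Δ j ω ^ 1 * (2 * D j ω - 1) * E j ω ^ 1) + E j ω ^ 2 := by
        intro ω
        rw [hrec j ω]
        linear_combination (E j ω ^ 2) * hSsq j ω
      have hint1 := (hprod j 1 1 (by norm_num)).1
      have h12 : Integrable
          (fun ω => Δ j ω ^ 2 + 2 * (Δ j ω ^ 1 * (2 * D j ω - 1) * E j ω ^ 1)) μ :=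
        (hΔint j 2 (by norm_num)).add (hint1.const_mul 2)
      have hEq : ∫ ω, Δ (j+1) ω ^ 2 ∂μ
          = (∫ ω, Δ j ω ^ 2 ∂μ)
            + 2 * ((∫ ω, Δ j ω ^ 1 * (2 * D j ω - 1) ∂μ) * (Nat.factorial 1 : ℝ))
            + (Nat.factorial 2 : ℝ) := by
        rw [integral_congr_ae (Filter.Eventually.of_forall hpt),
          integral_add h12 (hEint j 2),
          integral_add (hΔint j 2 (by norm_num)) (hint1.const_mul 2),
          integral_const_mul _ _, (hprod j 1 1 (by norm_num)).2, hEval j 2]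
      have hs := hsgn j 1 odd_one (by norm_num)
      have hf1 : (Nat.factorial 1 : ℝ) = 1 := by norm_num [Nat.factorial]
      have hf2 : (Nat.factorial 2 : ℝ) = 2 := by norm_num [Nat.factorial]
      rw [hEq, hf1, hf2]
      push_cast
      nlinarith [ih, hs]
  -- fourth moment bound
  intro j
  induction j with
  | zero => simp [hΔ0]
  | succ j ih =>
    have hpt : ∀ ω, Δ (j+1) ω ^ 4
        = Δ j ω ^ 4 + 4 * (Δ j ω ^ 3 * (2 * D j ω - 1) * E j ω ^ 1)
          + 6 * (Δ j ω ^ 2 * E j ω ^ 2)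
          + 4 * (Δ j ω ^ 1 * (2 * D j ω - 1) * E j ω ^ 3) + E j ω ^ 4 := by
      intro ω
      rw [hrec j ω]
      linear_combination (6 * Δ j ω ^ 2 * E j ω ^ 2
        + 4 * Δ j ω * (2 * D j ω - 1) * E j ω ^ 3
        + E j ω ^ 4 * ((2 * D j ω - 1) ^ 2 + 1)) * hSsq j ω
    have hA := hprod j 3 1 (by norm_num)
    have hB := hprodP j 2 2 (by norm_num)
    have hC := hprod j 1 3 (by norm_num)
    have hI1 : Integrable
        (fun ω => Δ j ω ^ 4 + 4 * (Δ j ω ^ 3 * (2 * D j ω - 1) * E j ω ^ 1)) μ :=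
      (hΔint j 4 le_rfl).add (hA.1.const_mul 4)
    have hI2 : Integrable
        (fun ω => Δ j ω ^ 4 + 4 * (Δ j ω ^ 3 * (2 * D j ω - 1) * E j ω ^ 1)
          + 6 * (Δ j ω ^ 2 * E j ω ^ 2)) μ := hI1.add (hB.1.const_mul 6)
    have hI3 : Integrable
        (fun ω => Δ j ω ^ 4 + 4 * (Δ j ω ^ 3 * (2 * D j ω - 1) * E j ω ^ 1)
          + 6 * (Δ j ω ^ 2 * E j ω ^ 2)
          + 4 * (Δ j ω ^ 1 * (2 * D j ω - 1) * E j ω ^ 3)) μ := hI2.add (hC.1.const_mul 4)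
    have hEq : ∫ ω, Δ (j+1) ω ^ 4 ∂μ
        = (∫ ω, Δ j ω ^ 4 ∂μ)
          + 4 * ((∫ ω, Δ j ω ^ 3 * (2 * D j ω - 1) ∂μ) * (Nat.factorial 1 : ℝ))
          + 6 * ((∫ ω, Δ j ω ^ 2 ∂μ) * (Nat.factorial 2 : ℝ))
          + 4 * ((∫ ω, Δ j ω ^ 1 * (2 * D j ω - 1) ∂μ) * (Nat.factorial 3 : ℝ))
          + (Nat.factorial 4 : ℝ) := by
      rw [integral_congr_ae (Filter.Eventually.of_forall hpt),
        integral_add hI3 (hEint j 4),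
        integral_add hI2 (hC.1.const_mul 4),
        integral_add hI1 (hB.1.const_mul 6),
        integral_add (hΔint j 4 le_rfl) (hA.1.const_mul 4),
        integral_const_mul _ _, integral_const_mul _ _, integral_const_mul _ _,
        hA.2, hB.2, hC.2, hEval j 4]
    have hs3 := hsgn j 3 ⟨1, rfl⟩ (by norm_num)
    have hs1 := hsgn j 1 odd_one (by norm_num)
    have h2j := h2 j
    have hf1 : (Nat.factorial 1 : ℝ) = 1 := by norm_num [Nat.factorial]
    have hf2 : (Nat.factorial 2 : ℝ) = 2 := by norm_num [Nat.factorial]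
    have hf3 : (Nat.factorial 3 : ℝ) = 6 := by norm_num [Nat.factorial]
    have hf4 : (Nat.factorial 4 : ℝ) = 24 := by norm_num [Nat.factorial]
    rw [hEq, hf1, hf2, hf3, hf4]
    push_cast
    push_cast at ih h2j
    nlinarith [ih, h2j, hs1, hs3, Nat.cast_nonneg (α := ℝ) j]
end

section
/- Let 0 ≤ a < b ≤ 1, f ∈ G_M², and let f_n ∈ PL_n² be defined by f_n(j/n) = f(j/n) for j = 0,…,n with linear interpolation. Then liminf_n ∫_a^b √(R*_X(f_n(s))·f'_{n,X}(s)) ds ≥ ∫_a^b √(R*_X(f(s))·f'_X(s)) ds. -/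
open Filter Topology MeasureTheory

set_option maxHeartbeats 1000000

/-- A member of the space `E`: a non-decreasing càdlàg function on `[0,1]` with `f(0) = 0`,
extended to `ℝ` by constants. -/
def IsE (f : ℝ → ℝ) : Prop :=
  Monotone f ∧ f 0 = 0 ∧ (∀ x ≤ (0:ℝ), f x = 0) ∧ (∀ x, (1:ℝ) ≤ x → f x = f 1) ∧
    ∀ x, ContinuousWithinAt f (Set.Ici x) x

/-- The Lévy metric on `E`. -/
noncomputable def levyDist (f g : ℝ → ℝ) : ℝ :=
  sInf {r : ℝ | 0 < r ∧ ∀ x ∈ Set.Icc (-r) (1 + r), f (x - r) - r < g x ∧ g x < f (x + r) + r}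

/-- Product (max) Lévy metric on `E²`. -/
noncomputable def dE2 (f g : (ℝ → ℝ) × (ℝ → ℝ)) : ℝ :=
  max (levyDist f.1 g.1) (levyDist f.2 g.2)

/-- `f ∈ G_{M,T}`: `s/M − 2T^{−2/3} ≤ f(s) ≤ M(s + 2T^{−2/3})` for all `s ∈ [0,1]`. -/
def GoodMT (M T : ℝ) (f : ℝ → ℝ) : Prop :=
  ∀ s ∈ Set.Icc (0:ℝ) 1,
    s / M - 2 * T ^ (-(2:ℝ)/3) ≤ f s ∧ f s ≤ M * (s + 2 * T ^ (-(2:ℝ)/3))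

/-- `f ∈ G_M`: `s/M ≤ f(s) ≤ Ms` for all `s ∈ [0,1]`. -/
def Good (M : ℝ) (f : ℝ → ℝ) : Prop :=
  ∀ s ∈ Set.Icc (0:ℝ) 1, s / M ≤ f s ∧ f s ≤ M * s

/-- `f ∈ PL_n`: `f` is linear on each interval `[i/n, (i+1)/n]`. -/
def PLn (n : ℕ) (f : ℝ → ℝ) : Prop :=
  ∀ i : ℕ, i < n → ∀ s ∈ Set.Icc ((i:ℝ)/n) (((i:ℝ)+1)/n),
    f s = f ((i:ℝ)/n) + (s - (i:ℝ)/n) * ((n:ℝ) * (f (((i:ℝ)+1)/n) - f ((i:ℝ)/n)))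

/-- `P*(x,y)`: limiting splitting probability. -/
noncomputable def PstarR (x y : ℝ) : ℝ :=
  if x = 0 ∧ y = 0 then 1/2 else if y ≤ x then y / (2 * x) else 1 - x / (2 * y)

/-- `R*(x,y) = (x/y) ∨ (y/x)` (with `R*(0,0) = 1`). -/
noncomputable def RstarR (x y : ℝ) : ℝ :=
  if x = 0 ∧ y = 0 then 1 else max (x / y) (y / x)

/-- `R*_X = R*·P*` for `y > 0`, and `1/2` if `y = 0`. -/
noncomputable def RstarX (x y : ℝ) : ℝ :=
  if y = 0 then 1/2 else RstarR x y * PstarR x y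

/-! ### Auxiliary lemmas -/

lemma RstarX_eq_of_pos {x y : ℝ} (hx : 0 < x) (hy : 0 < y) :
    RstarX x y = max (1/2) (y/x - 1/2) := by
  have hx0 := hx.ne'
  have hy0 := hy.ne'
  rw [RstarX, RstarR, PstarR, if_neg hy0, if_neg (by tauto), if_neg (by tauto)]
  rcases le_or_gt y x with h | h
  · rw [if_pos h]
    have h1 : y / x ≤ x / y := by
      rw [div_le_div_iff₀ hx hy]
      exact mul_self_le_mul_self hy.le h
    rw [max_eq_left h1]
    have h2 : y / x - 1/2 ≤ 1/2 := by
      have : y / x ≤ 1 := (div_le_one hx).2 h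
      linarith
    rw [max_eq_left h2]
    field_simp
  · rw [if_neg (not_le.2 h)]
    have h1 : x / y ≤ y / x := by
      rw [div_le_div_iff₀ hy hx]
      exact mul_self_le_mul_self hx.le h.le
    rw [max_eq_right h1]
    have h2 : (1:ℝ)/2 ≤ y / x - 1/2 := by
      have : 1 ≤ y / x := (one_le_div hx).2 h.le
      linarith
    rw [max_eq_right h2]
    field_simp

lemma RstarX_le_sq {M x y : ℝ} (hM : 1 ≤ M) (hy : 0 ≤ y) (hxy : y ≤ M^2 * x) :
    RstarX x y ≤ M^2 := by
  have hM2 : (1:ℝ) ≤ M^2 := one_le_pow₀ hM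
  rcases eq_or_lt_of_le hy with h0 | h0
  · rw [RstarX, if_pos h0.symm]; linarith
  · have hx : 0 < x := by
      by_contra hx
      push_neg at hx
      nlinarith
    rw [RstarX_eq_of_pos hx h0]
    apply max_le (by linarith)
    have : y / x ≤ M^2 := (div_le_iff₀ hx).2 hxy
    linarith

lemma RstarX_nonneg {x y : ℝ} (hx : 0 ≤ x) (hy : 0 ≤ y) : 0 ≤ RstarX x y := by
  rcases eq_or_lt_of_le hy with h0 | h0
  · rw [RstarX, if_pos h0.symm]; norm_num
  rcases eq_or_lt_of_le hx with h1 | h1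
  · rw [RstarX, if_neg h0.ne', RstarR, PstarR, if_neg (by intro h; exact h0.ne' h.2),
      if_neg (by intro h; exact h0.ne' h.2)]
    rw [← h1]
    rw [if_neg (not_le.2 h0)]
    simp
  · rw [RstarX_eq_of_pos h1 h0]
    have : (0:ℝ) ≤ 1/2 := by norm_num
    exact this.trans (le_max_left _ _)

lemma measurable_rstarX : Measurable (fun p : ℝ × ℝ => RstarX p.1 p.2) := by
  unfold RstarX RstarR PstarR
  apply Measurable.ite (measurableSet_eq_fun measurable_snd measurable_const) measurable_const
  apply Measurable.mul
  · apply Measurable.ite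
    · exact (measurableSet_eq_fun measurable_fst measurable_const).inter
        (measurableSet_eq_fun measurable_snd measurable_const)
    · exact measurable_const
    · exact Measurable.max (measurable_fst.div measurable_snd) (measurable_snd.div measurable_fst)
  · apply Measurable.ite
    · exact (measurableSet_eq_fun measurable_fst measurable_const).inter
        (measurableSet_eq_fun measurable_snd measurable_const)
    · exact measurable_const
    · apply Measurable.ite (measurableSet_le measurable_snd measurable_fst)
      · exact measurable_snd.div (measurable_const.mul measurable_fst)
      · exact measurable_const.sub (measurable_fst.div (measurable_const.mul measurable_snd))

/-- Straddle lemma: difference quotients over shrinking straddling intervals converge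
to the derivative. -/
lemma straddle {f : ℝ → ℝ} {d s : ℝ} (hf : HasDerivAt f d s) {u v : ℕ → ℝ}
    (hev : ∀ᶠ n in atTop, u n ≤ s ∧ s ≤ v n ∧ u n < v n)
    (hut : Tendsto u atTop (𝓝 s)) (hvt : Tendsto v atTop (𝓝 s)) :
    Tendsto (fun n => (f (v n) - f (u n)) / (v n - u n)) atTop (𝓝 d) := by
  rw [Metric.tendsto_atTop]
  intro ε hε
  have hlo := hasDerivAt_iff_isLittleO.1 hf
  have h2 : ∀ᶠ t in 𝓝 s, ‖f t - f s - (t - s) • d‖ ≤ ε/2 * ‖t - s‖ :=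
    hlo.def (by positivity)
  have hu2 := hut.eventually h2
  have hv2 := hvt.eventually h2
  rw [eventually_atTop] at hu2 hv2
  rw [eventually_atTop] at hev
  obtain ⟨N1, hN1⟩ := hu2
  obtain ⟨N2, hN2⟩ := hv2
  obtain ⟨N0, hN0⟩ := hev
  refine ⟨max (max N1 N2) N0, fun n hn => ?_⟩
  have h1 := hN1 n (le_trans (le_trans (le_max_left _ _) (le_max_left _ _)) hn)
  have h2' := hN2 n (le_trans (le_trans (le_max_right _ _) (le_max_left _ _)) hn)
  obtain ⟨hu, hv, huv⟩ := hN0 n (le_trans (le_max_right _ _) hn)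
  have hvu : 0 < v n - u n := sub_pos.2 huv
  rw [Real.dist_eq]
  have key : |f (v n) - f (u n) - (v n - u n) * d| ≤ ε/2 * (v n - u n) := by
    have e1 : f (v n) - f (u n) - (v n - u n) * d
        = (f (v n) - f s - (v n - s) * d) - (f (u n) - f s - (u n - s) * d) := by ring
    rw [e1]
    calc |(f (v n) - f s - (v n - s) * d) - (f (u n) - f s - (u n - s) * d)|
        ≤ |f (v n) - f s - (v n - s) * d| + |f (u n) - f s - (u n - s) * d| := abs_sub _ _
      _ ≤ ε/2 * |v n - s| + ε/2 * |u n - s| := by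
          simp only [smul_eq_mul, Real.norm_eq_abs] at h1 h2'
          exact add_le_add h2' h1
      _ = ε/2 * (v n - u n) := by
          rw [abs_of_nonneg (sub_nonneg.2 hv), abs_of_nonpos (sub_nonpos.2 hu)]
          ring
  have e2 : (f (v n) - f (u n)) / (v n - u n) - d
      = (f (v n) - f (u n) - (v n - u n) * d) / (v n - u n) := by
    field_simp
  rw [e2, abs_div, abs_of_pos hvu]
  have : |f (v n) - f (u n) - (v n - u n) * d| / (v n - u n) ≤ ε/2 := by
    rw [div_le_iff₀ hvu]; linarith
  linarith

lemma floor_interval {n : ℕ} (hn : 1 ≤ n) {s : ℝ} (hs0 : 0 < s) (hs1 : s < 1) :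
    ⌊(n:ℝ)*s⌋₊ < n ∧ ((⌊(n:ℝ)*s⌋₊ : ℝ))/n ≤ s ∧ s < ((⌊(n:ℝ)*s⌋₊ : ℝ)+1)/n := by
  have hn0 : (0:ℝ) < n := by exact_mod_cast hn
  have hfl : ((⌊(n:ℝ)*s⌋₊ : ℝ)) ≤ (n:ℝ)*s := Nat.floor_le (by positivity)
  have hfl2 : (n:ℝ)*s < (⌊(n:ℝ)*s⌋₊ : ℝ) + 1 := Nat.lt_floor_add_one _
  refine ⟨?_, ?_, ?_⟩
  · exact (Nat.floor_lt (by positivity)).2 (by nlinarith)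
  · rw [div_le_iff₀ hn0]; linarith
  · rw [lt_div_iff₀ hn0]; linarith

lemma piece_floor_eq {n j : ℕ} (hn : 1 ≤ n) {s : ℝ} (h1 : (j:ℝ)/n ≤ s)
    (h2 : s < ((j:ℝ)+1)/n) : ⌊(n:ℝ)*s⌋₊ = j := by
  have hn0 : (0:ℝ) < n := by exact_mod_cast hn
  have hs0 : (0:ℝ) ≤ s := le_trans (by positivity) h1
  rw [Nat.floor_eq_iff (by positivity)]
  rw [div_le_iff₀ hn0] at h1
  rw [lt_div_iff₀ hn0] at h2
  constructor <;> nlinarith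

lemma pl_deriv {n : ℕ} {g : ℝ → ℝ} (hPL : PLn n g) {i : ℕ} (hi : i < n) {s : ℝ}
    (h1 : (i:ℝ)/n < s) (h2 : s < ((i:ℝ)+1)/n) :
    deriv g s = (n:ℝ) * (g (((i:ℝ)+1)/n) - g ((i:ℝ)/n)) := by
  set c := g ((i:ℝ)/n) with hc
  set m := (n:ℝ) * (g (((i:ℝ)+1)/n) - g ((i:ℝ)/n)) with hm
  have heq : g =ᶠ[𝓝 s] fun t => c + (t - (i:ℝ)/n) * m := by
    filter_upwards [Ioo_mem_nhds h1 h2] with t ht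
    exact hPL i hi t ⟨ht.1.le, ht.2.le⟩
  have hd : HasDerivAt (fun t => c + (t - (i:ℝ)/n) * m) m s := by
    simpa using (((hasDerivAt_id s).sub_const ((i:ℝ)/n)).mul_const m).const_add c
  rw [heq.deriv_eq, hd.deriv]

/-- The set of grid points `i/k` is countable, hence null. -/
lemma grid_null : MeasureTheory.volume {x : ℝ | ∃ k i : ℕ, x = (i:ℝ)/k} = 0 := by
  have hc : {x : ℝ | ∃ k i : ℕ, x = (i:ℝ)/k}.Countable := by
    have : {x : ℝ | ∃ k i : ℕ, x = (i:ℝ)/k}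
        = Set.range (fun p : ℕ × ℕ => (p.2:ℝ)/(p.1:ℝ)) := by
      ext x
      simp only [Set.mem_setOf_eq, Set.mem_range, Prod.exists]
      constructor
      · rintro ⟨k, i, rfl⟩; exact ⟨k, i, rfl⟩
      · rintro ⟨k, i, rfl⟩; exact ⟨k, i, rfl⟩
    rw [this]
    exact Set.countable_range _
  exact hc.measure_zero _

lemma pl_aemeas {n : ℕ} (hn : 1 ≤ n) {g : ℝ → ℝ} (hPL : PLn n g) {a b : ℝ}
    (ha : 0 ≤ a) (hb : b ≤ 1) :
    AEMeasurable g (volume.restrict (Set.Ioc a b)) := by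
  classical
  have hφ : Measurable (fun s : ℝ => ∑ i ∈ Finset.range n,
    Set.indicator (Set.Ico ((i:ℝ)/n) (((i:ℝ)+1)/n))
      (fun t => g ((i:ℝ)/n) + (t - (i:ℝ)/n) * ((n:ℝ) * (g (((i:ℝ)+1)/n) - g ((i:ℝ)/n)))) s) := by
    apply Finset.measurable_sum
    intro i _
    exact ((measurable_const.add ((measurable_id.sub measurable_const).mul
      measurable_const))).indicator measurableSet_Ico
  apply hφ.aemeasurable.congr
  have hne1 : ∀ᵐ s : ℝ ∂volume, s ≠ (1:ℝ) := by
    rw [ae_iff]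
    have : {s : ℝ | ¬ s ≠ 1} = {(1:ℝ)} := by ext x; simp
    rw [this]
    exact measure_singleton 1
  filter_upwards [ae_restrict_mem measurableSet_Ioc, ae_restrict_of_ae hne1] with s hs hs1
  have hs0 : 0 < s := lt_of_le_of_lt ha hs.1
  have hslt : s < 1 := lt_of_le_of_ne (hs.2.trans hb) hs1
  obtain ⟨hiltn, hle, hlt⟩ := floor_interval hn hs0 hslt
  set i := ⌊(n:ℝ)*s⌋₊ with hi
  beta_reduce
  rw [Finset.sum_eq_single_of_mem i (Finset.mem_range.2 hiltn)
    (fun j _ hj => Set.indicator_of_notMem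
      (fun hmem => hj (by rw [← piece_floor_eq hn hmem.1 hmem.2])) _),
    Set.indicator_of_mem (Set.mem_Ico.2 ⟨hle, hlt⟩)]
  exact (hPL i hiltn s ⟨hle, hlt.le⟩).symm

lemma pl_integral_deriv {n : ℕ} (hn : 1 ≤ n) {g : ℝ → ℝ} (hPL : PLn n g)
    (hmono : ∀ i : ℕ, i < n → g ((i:ℝ)/n) ≤ g (((i:ℝ)+1)/n))
    {a b : ℝ} (ha : 0 ≤ a) (hb : b ≤ 1) :
    ∫ s in Set.Ioc a b, deriv g s ≤ g 1 - g 0 := by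
  classical
  have hn0 : (0:ℝ) < n := by exact_mod_cast hn
  set ψ : ℝ → ℝ := fun s => ∑ i ∈ Finset.range n,
    Set.indicator (Set.Ioo ((i:ℝ)/n) (((i:ℝ)+1)/n))
      (fun _ => (n:ℝ) * (g (((i:ℝ)+1)/n) - g ((i:ℝ)/n))) s with hψdef
  have hint : ∀ i : ℕ, i < n → IntegrableOn
      (Set.indicator (Set.Ioo ((i:ℝ)/n) (((i:ℝ)+1)/n))
        (fun _ : ℝ => (n:ℝ) * (g (((i:ℝ)+1)/n) - g ((i:ℝ)/n)))) (Set.Ioc 0 1) := by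
    intro i hi
    apply Integrable.indicator _ measurableSet_Ioo
    refine integrableOn_const ?_ enorm_ne_top
    rw [Real.volume_Ioc]
    exact ENNReal.ofReal_ne_top
  have hintpsi : IntegrableOn ψ (Set.Ioc 0 1) := by
    rw [hψdef]
    exact integrable_finset_sum _ (fun i hi => hint i (Finset.mem_range.1 hi))
  have haeeq : (fun s => deriv g s) =ᵐ[volume.restrict (Set.Ioc a b)] ψ := by
    have hgd : ∀ᵐ s : ℝ ∂volume, s ∉ {x : ℝ | ∃ k i : ℕ, x = (i:ℝ)/k} := by
      rw [ae_iff]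
      simpa using grid_null
    filter_upwards [ae_restrict_mem measurableSet_Ioc, ae_restrict_of_ae hgd] with s hs hsQ
    have hs0 : 0 < s := lt_of_le_of_lt ha hs.1
    have hs1 : s < 1 := lt_of_le_of_ne (hs.2.trans hb) (fun h => hsQ ⟨1, 1, by simp [h]⟩)
    obtain ⟨hiltn, hle, hlt⟩ := floor_interval hn hs0 hs1
    set i := ⌊(n:ℝ)*s⌋₊ with hidef
    have hlt' : ((i:ℝ))/n < s :=
      lt_of_le_of_ne hle (fun h => hsQ ⟨n, i, h.symm⟩)
    rw [pl_deriv hPL hiltn hlt' hlt, hψdef]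
    beta_reduce
    rw [Finset.sum_eq_single_of_mem i (Finset.mem_range.2 hiltn)
      (fun j _ hj => Set.indicator_of_notMem
        (fun hmem => hj (by rw [← piece_floor_eq hn hmem.1.le hmem.2])) _),
      Set.indicator_of_mem (Set.mem_Ioo.2 ⟨hlt', hlt⟩)]
  rw [integral_congr_ae haeeq]
  have hsub : Set.Ioc a b ⊆ Set.Ioc 0 1 := Set.Ioc_subset_Ioc ha hb
  have hnonneg : 0 ≤ᵐ[volume.restrict (Set.Ioc 0 1)] ψ := by
    apply Filter.Eventually.of_forall
    intro s
    rw [hψdef]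
    apply Finset.sum_nonneg
    intro i hi
    apply Set.indicator_nonneg
    intro t _
    have h2 : 0 ≤ g (((i:ℝ)+1)/n) - g ((i:ℝ)/n) :=
      sub_nonneg.2 (hmono i (Finset.mem_range.1 hi))
    positivity
  have hstep : ∫ s in Set.Ioc a b, ψ s ≤ ∫ s in Set.Ioc 0 1, ψ s :=
    setIntegral_mono_set hintpsi hnonneg (Filter.Eventually.of_forall hsub)
  refine hstep.trans ?_
  have hcalc : ∫ s in Set.Ioc 0 1, ψ s = ∑ i ∈ Finset.range n,
      (g (((i:ℝ)+1)/n) - g ((i:ℝ)/n)) := by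
    rw [hψdef, integral_finset_sum _ (fun i hi => hint i (Finset.mem_range.1 hi))]
    apply Finset.sum_congr rfl
    intro i hi
    have hi' := Finset.mem_range.1 hi
    rw [integral_indicator measurableSet_Ioo, Measure.restrict_restrict measurableSet_Ioo,
      integral_const]
    have hss : Set.Ioo ((i:ℝ)/n) (((i:ℝ)+1)/n) ∩ Set.Ioc 0 1
        = Set.Ioo ((i:ℝ)/n) (((i:ℝ)+1)/n) := by
      apply Set.inter_eq_self_of_subset_left
      intro t ht
      refine ⟨lt_of_le_of_lt (by positivity) ht.1, le_trans ht.2.le ?_⟩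
      rw [div_le_one hn0]
      have : (i:ℝ) + 1 ≤ (n:ℝ) := by exact_mod_cast hi'
      linarith
    rw [hss, measureReal_restrict_apply_univ, measureReal_def, Real.volume_Ioo]
    have hlen : ((i:ℝ)+1)/n - (i:ℝ)/n = 1/n := by rw [← sub_div, add_sub_cancel_left]
    rw [hlen, ENNReal.toReal_ofReal (by positivity), smul_eq_mul]
    field_simp
  rw [hcalc]
  have htel := Finset.sum_range_sub (fun i : ℕ => g ((i:ℝ)/n)) n
  simp only [Nat.cast_add, Nat.cast_one, Nat.cast_zero] at htel
  rw [htel, div_self hn0.ne', zero_div]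

lemma master {M : ℝ} (hM : 1 < M) {f1 f2 : ℝ → ℝ}
    (hmono1 : Monotone f1) (hmono2 : Monotone f2)
    (hG1 : Good M f1) (hG2 : Good M f2) {n : ℕ} (hn : 1 ≤ n) {g1 g2 : ℝ → ℝ}
    (hPL1 : PLn n g1) (hPL2 : PLn n g2)
    (hgrid : ∀ j : ℕ, j ≤ n → g1 ((j:ℝ)/n) = f1 ((j:ℝ)/n) ∧ g2 ((j:ℝ)/n) = f2 ((j:ℝ)/n))
    {s : ℝ} (hs0 : 0 < s) (hs1 : s < 1)
    (hsQ : s ∉ {x : ℝ | ∃ k i : ℕ, x = (i:ℝ)/k}) :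
    ⌊(n:ℝ)*s⌋₊ < n ∧ ((⌊(n:ℝ)*s⌋₊:ℝ))/n < s ∧ s < ((⌊(n:ℝ)*s⌋₊:ℝ)+1)/n ∧
      deriv g1 s = (n:ℝ) * (f1 (((⌊(n:ℝ)*s⌋₊:ℝ)+1)/n) - f1 ((⌊(n:ℝ)*s⌋₊:ℝ)/n)) ∧
      g1 s = f1 ((⌊(n:ℝ)*s⌋₊:ℝ)/n) + (s - (⌊(n:ℝ)*s⌋₊:ℝ)/n) *
        ((n:ℝ) * (f1 (((⌊(n:ℝ)*s⌋₊:ℝ)+1)/n) - f1 ((⌊(n:ℝ)*s⌋₊:ℝ)/n))) ∧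
      g2 s = f2 ((⌊(n:ℝ)*s⌋₊:ℝ)/n) + (s - (⌊(n:ℝ)*s⌋₊:ℝ)/n) *
        ((n:ℝ) * (f2 (((⌊(n:ℝ)*s⌋₊:ℝ)+1)/n) - f2 ((⌊(n:ℝ)*s⌋₊:ℝ)/n))) ∧
      0 ≤ deriv g1 s ∧ deriv g1 s ≤ (n:ℝ)*M ∧
      0 ≤ g1 s ∧ 0 ≤ g2 s ∧ g2 s ≤ M^2 * g1 s ∧
      f1 ((⌊(n:ℝ)*s⌋₊:ℝ)/n) ≤ g1 s ∧ g1 s ≤ f1 (((⌊(n:ℝ)*s⌋₊:ℝ)+1)/n) ∧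
      f2 ((⌊(n:ℝ)*s⌋₊:ℝ)/n) ≤ g2 s ∧ g2 s ≤ f2 (((⌊(n:ℝ)*s⌋₊:ℝ)+1)/n) := by
  have hM0 : (0:ℝ) < M := lt_trans one_pos hM
  have hn0 : (0:ℝ) < n := by exact_mod_cast hn
  obtain ⟨hiltn, hle, hltv⟩ := floor_interval hn hs0 hs1
  set i := ⌊(n:ℝ)*s⌋₊ with hidef
  have hltu : ((i:ℝ))/n < s := lt_of_le_of_ne hle (fun h => hsQ ⟨n, i, h.symm⟩)
  set u : ℝ := (i:ℝ)/n with hu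
  set v : ℝ := ((i:ℝ)+1)/n with hv
  have hcast : v = (((i+1:ℕ)):ℝ)/n := by rw [hv]; push_cast; ring
  have hgu1 : g1 u = f1 u := (hgrid i hiltn.le).1
  have hgu2 : g2 u = f2 u := (hgrid i hiltn.le).2
  have hgv1 : g1 v = f1 v := by rw [hcast]; exact (hgrid (i+1) hiltn).1
  have hgv2 : g2 v = f2 v := by rw [hcast]; exact (hgrid (i+1) hiltn).2
  have hd : deriv g1 s = (n:ℝ) * (f1 v - f1 u) := by
    rw [pl_deriv hPL1 hiltn hltu hltv, hgu1, hgv1]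
  have hval1 : g1 s = f1 u + (s - u) * ((n:ℝ) * (f1 v - f1 u)) := by
    rw [hPL1 i hiltn s ⟨hltu.le, hltv.le⟩, hgu1, hgv1]
  have hval2 : g2 s = f2 u + (s - u) * ((n:ℝ) * (f2 v - f2 u)) := by
    rw [hPL2 i hiltn s ⟨hltu.le, hltv.le⟩, hgu2, hgv2]
  have huv : u < v := hltu.trans hltv
  have hu0 : 0 ≤ u := by positivity
  have hv1 : v ≤ 1 := by
    rw [hv, div_le_one hn0]
    have : (i:ℝ) + 1 ≤ (n:ℝ) := by exact_mod_cast hiltn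
    linarith
  have hvu : v - u = 1/n := by rw [hu, hv]; field_simp; ring
  have hsu : 0 ≤ s - u := le_of_lt (sub_pos.2 hltu)
  have hsv : s - u ≤ 1/n := by rw [← hvu]; linarith
  have hGu1 := hG1 u ⟨hu0, le_trans huv.le hv1⟩
  have hGv1 := hG1 v ⟨le_trans hu0 huv.le, hv1⟩
  have hGu2 := hG2 u ⟨hu0, le_trans huv.le hv1⟩
  have hGv2 := hG2 v ⟨le_trans hu0 huv.le, hv1⟩
  have hf1u0 : 0 ≤ f1 u := le_trans (by positivity) hGu1.1
  have hf2u0 : 0 ≤ f2 u := le_trans (by positivity) hGu2.1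
  have hmo1 : f1 u ≤ f1 v := hmono1 huv.le
  have hmo2 : f2 u ≤ f2 v := hmono2 huv.le
  have hd0 : 0 ≤ deriv g1 s := by rw [hd]; have := sub_nonneg.2 hmo1; positivity
  have hdM : deriv g1 s ≤ (n:ℝ)*M := by
    rw [hd]
    have h2 : M * v ≤ M * 1 := mul_le_mul_of_nonneg_left hv1 hM0.le
    have h1 : f1 v - f1 u ≤ M := by
      have := hGv1.2
      linarith
    exact (mul_le_mul_of_nonneg_left h1 hn0.le)
  have hg10 : 0 ≤ g1 s := by
    rw [hval1]
    have := sub_nonneg.2 hmo1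
    positivity
  have hg20 : 0 ≤ g2 s := by
    rw [hval2]
    have := sub_nonneg.2 hmo2
    positivity
  have hg1le : g1 s ≤ f1 v := by
    rw [hval1]
    have h1 : (s - u) * ((n:ℝ) * (f1 v - f1 u)) ≤ (1/n) * ((n:ℝ) * (f1 v - f1 u)) := by
      apply mul_le_mul_of_nonneg_right hsv
      have := sub_nonneg.2 hmo1; positivity
    have h2 : (1/(n:ℝ)) * ((n:ℝ) * (f1 v - f1 u)) = f1 v - f1 u := by field_simp
    linarith
  have hg2le : g2 s ≤ f2 v := by
    rw [hval2]
    have h1 : (s - u) * ((n:ℝ) * (f2 v - f2 u)) ≤ (1/n) * ((n:ℝ) * (f2 v - f2 u)) := by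
      apply mul_le_mul_of_nonneg_right hsv
      have := sub_nonneg.2 hmo2; positivity
    have h2 : (1/(n:ℝ)) * ((n:ℝ) * (f2 v - f2 u)) = f2 v - f2 u := by field_simp
    linarith
  have hg1ge : f1 u ≤ g1 s := by
    rw [hval1]
    exact le_add_of_nonneg_right (mul_nonneg hsu (mul_nonneg hn0.le (sub_nonneg.2 hmo1)))
  have hg2ge : f2 u ≤ g2 s := by
    rw [hval2]
    exact le_add_of_nonneg_right (mul_nonneg hsu (mul_nonneg hn0.le (sub_nonneg.2 hmo2)))
  have hratio : g2 s ≤ M^2 * g1 s := by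
    set t : ℝ := (s - u) * n with ht
    have ht0 : 0 ≤ t := by positivity
    have ht1 : t ≤ 1 := by
      rw [ht]
      calc (s-u) * (n:ℝ) ≤ (1/n) * n := mul_le_mul_of_nonneg_right hsv hn0.le
        _ = 1 := by field_simp
    have e1 : g1 s = f1 u + t * (f1 v - f1 u) := by rw [hval1, ht]; ring
    have e2 : g2 s = f2 u + t * (f2 v - f2 u) := by rw [hval2, ht]; ring
    rw [e1, e2]
    have hA : f2 u ≤ M * u := hGu2.2
    have hB : f2 v ≤ M * v := hGv2.2
    have hC : u ≤ M * f1 u := by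
      have := hGu1.1; rw [div_le_iff₀ hM0] at this; linarith [this]
    have hD : v ≤ M * f1 v := by
      have := hGv1.1; rw [div_le_iff₀ hM0] at this; linarith [this]
    have key : M^2 * (f1 u + t*(f1 v - f1 u)) - (f2 u + t*(f2 v - f2 u))
        = (1-t)*(M*(M*f1 u - u)) + (1-t)*(M*u - f2 u)
          + t*(M*(M*f1 v - v)) + t*(M*v - f2 v) := by ring
    have k1 : 0 ≤ (1-t)*(M*(M*f1 u - u)) :=
      mul_nonneg (by linarith) (mul_nonneg hM0.le (by linarith))
    have k2 : 0 ≤ (1-t)*(M*u - f2 u) := mul_nonneg (by linarith) (by linarith)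
    have k3 : 0 ≤ t*(M*(M*f1 v - v)) :=
      mul_nonneg ht0 (mul_nonneg hM0.le (by linarith))
    have k4 : 0 ≤ t*(M*v - f2 v) := mul_nonneg ht0 (by linarith)
    linarith
  exact ⟨hiltn, hltu, hltv, hd, hval1, hval2, hd0, hdM, hg10, hg20, hratio,
    hg1ge, hg1le, hg2ge, hg2le⟩

/-- Lower semicontinuity under piecewise-linear interpolation: if `f ∈ G_M²` and
`f_n ∈ PL_n²` interpolates `f` at the grid points `j/n`, then
`liminf ∫_a^b √(R*_X(f_n) f'_{n,X}) ≥ ∫_a^b √(R*_X(f) f'_X)`. -/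
theorem liminf_sqrt_cross_term (a b M : ℝ) (ha : 0 ≤ a) (hab : a < b) (hb : b ≤ 1)
    (hM : 1 < M) (f : (ℝ → ℝ) × (ℝ → ℝ)) (fn : ℕ → (ℝ → ℝ) × (ℝ → ℝ))
    (hf : IsE f.1 ∧ IsE f.2 ∧ Good M f.1 ∧ Good M f.2)
    (hinterp : ∀ n : ℕ, 1 ≤ n → PLn n (fn n).1 ∧ PLn n (fn n).2 ∧
      ∀ j : ℕ, j ≤ n → (fn n).1 ((j:ℝ)/n) = f.1 ((j:ℝ)/n) ∧
        (fn n).2 ((j:ℝ)/n) = f.2 ((j:ℝ)/n)) :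
    ∫ s in a..b, Real.sqrt (RstarX (f.1 s) (f.2 s) * deriv f.1 s)
      ≤ Filter.liminf
          (fun n => ∫ s in a..b,
            Real.sqrt (RstarX ((fn n).1 s) ((fn n).2 s) * deriv (fn n).1 s)) atTop := by
  classical
  obtain ⟨hE1, hE2, hG1, hG2⟩ := hf
  have hmono1 : Monotone f.1 := hE1.1
  have hmono2 : Monotone f.2 := hE2.1
  have hM0 : (0:ℝ) < M := lt_trans one_pos hM
  simp only [intervalIntegral.integral_of_le hab.le]
  set μ := volume.restrict (Set.Ioc a b) with hμ
  set G : ℕ → ℝ → ℝ :=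
    fun n s => Real.sqrt (RstarX ((fn n).1 s) ((fn n).2 s) * deriv (fn n).1 s) with hGdef
  set H : ℝ → ℝ := fun s => Real.sqrt (RstarX (f.1 s) (f.2 s) * deriv f.1 s) with hHdef
  set I : ℕ → ℝ := fun n => ∫ s, G n s ∂μ with hIdef
  show ∫ s, H s ∂μ ≤ liminf I atTop
  -- the grid is null
  have hgridae : ∀ᵐ s : ℝ ∂volume, s ∉ {x : ℝ | ∃ k i : ℕ, x = (i:ℝ)/k} := by
    rw [ae_iff]; simpa using grid_null
  have hQ1 : (1:ℝ) ∈ {x : ℝ | ∃ k i : ℕ, x = (i:ℝ)/k} := ⟨1, 1, by norm_num⟩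
  -- basic bounds for points of (a, b]
  have hmem01 : ∀ s ∈ Set.Ioc a b, 0 < s ∧ s ≤ 1 :=
    fun s hs => ⟨lt_of_le_of_lt ha hs.1, hs.2.trans hb⟩
  -- a.e. convergence of the integrands
  have hconv : ∀ᵐ s ∂μ, Tendsto (fun n => G n s) atTop (𝓝 (H s)) := by
    filter_upwards [ae_restrict_mem measurableSet_Ioc, ae_restrict_of_ae hgridae,
      ae_restrict_of_ae hmono1.ae_differentiableAt,
      ae_restrict_of_ae hmono2.ae_differentiableAt] with s hs hsQ hd1 hd2
    have hs0 : 0 < s := (hmem01 s hs).1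
    have hs1 : s < 1 := lt_of_le_of_ne (hmem01 s hs).2 (fun h => hsQ (h ▸ hQ1))
    set u : ℕ → ℝ := fun n => ((⌊(n:ℝ)*s⌋₊:ℝ))/n with hudef
    set v : ℕ → ℝ := fun n => ((⌊(n:ℝ)*s⌋₊:ℝ)+1)/n with hvdef
    have hfacts := fun (n : ℕ) (hn : 1 ≤ n) =>
      master hM hmono1 hmono2 hG1 hG2 hn (hinterp n hn).1 (hinterp n hn).2.1
        (hinterp n hn).2.2 hs0 hs1 hsQ
    have hn0 : ∀ n : ℕ, 1 ≤ n → (0:ℝ) < n := fun n hn => by exact_mod_cast hn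
    have huv : ∀ n : ℕ, 1 ≤ n → v n - u n = 1/n := by
      intro n hn
      rw [hudef, hvdef]
      field_simp
      ring
    have hub : ∀ n : ℕ, 1 ≤ n → s - 1/n ≤ u n := by
      intro n hn
      have h1 : (n:ℝ)*s - 1 < (⌊(n:ℝ)*s⌋₊:ℝ) := by
        have := Nat.sub_one_lt_floor ((n:ℝ)*s)
        linarith
      rw [hudef]
      beta_reduce
      rw [le_div_iff₀ (hn0 n hn)]
      have hne : (n:ℝ) ≠ 0 := (hn0 n hn).ne'
      calc (s - 1/n) * n = n*s - 1 := by field_simp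
        _ ≤ (⌊(n:ℝ)*s⌋₊:ℝ) := h1.le
    have hut : Tendsto u atTop (𝓝 s) := by
      apply tendsto_of_tendsto_of_tendsto_of_le_of_le'
        (tendsto_const_nhds.sub tendsto_one_div_atTop_nhds_zero_nat |>.congr'
          (by filter_upwards with n; rfl) |>.mono_right (by rw [sub_zero]))
        tendsto_const_nhds
      · filter_upwards [eventually_ge_atTop 1] with n hn using hub n hn
      · filter_upwards [eventually_ge_atTop 1] with n hn using (hfacts n hn).2.1.le
    have hvt : Tendsto v atTop (𝓝 s) := by
      apply tendsto_of_tendsto_of_tendsto_of_le_of_le' tendsto_const_nhds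
        ((tendsto_const_nhds.add tendsto_one_div_atTop_nhds_zero_nat).mono_right
          (by rw [add_zero]))
      · filter_upwards [eventually_ge_atTop 1] with n hn using (hfacts n hn).2.2.1.le
      · filter_upwards [eventually_ge_atTop 1] with n hn
        have h1 := hub n hn
        have h2 := huv n hn
        have : v n = u n + 1/n := by linarith
        rw [this]
        have := (hfacts n hn).2.1.le
        linarith
    have hev : ∀ᶠ n in atTop, u n ≤ s ∧ s ≤ v n ∧ u n < v n := by
      filter_upwards [eventually_ge_atTop 1] with n hn
      exact ⟨(hfacts n hn).2.1.le, (hfacts n hn).2.2.1.le,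
        (hfacts n hn).2.1.trans (hfacts n hn).2.2.1⟩
    -- derivative convergence
    have hslope : Tendsto (fun n => (f.1 (v n) - f.1 (u n)) / (v n - u n)) atTop
        (𝓝 (deriv f.1 s)) := straddle hd1.hasDerivAt hev hut hvt
    have hderiv_t : Tendsto (fun n => deriv (fn n).1 s) atTop (𝓝 (deriv f.1 s)) := by
      apply hslope.congr'
      filter_upwards [eventually_ge_atTop 1] with n hn
      rw [huv n hn, (hfacts n hn).2.2.2.1, div_div_eq_mul_div, div_one, mul_comm]
    -- value convergence
    have hx : Tendsto (fun n => (fn n).1 s) atTop (𝓝 (f.1 s)) := by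
      apply tendsto_of_tendsto_of_tendsto_of_le_of_le'
        ((hd1.continuousAt.tendsto).comp hut) ((hd1.continuousAt.tendsto).comp hvt)
      · filter_upwards [eventually_ge_atTop 1] with n hn
        obtain ⟨-,-,-,-,-,-,-,-,-,-,-,h12,-,-,-⟩ := hfacts n hn
        exact h12
      · filter_upwards [eventually_ge_atTop 1] with n hn
        obtain ⟨-,-,-,-,-,-,-,-,-,-,-,-,h13,-,-⟩ := hfacts n hn
        exact h13
    have hy : Tendsto (fun n => (fn n).2 s) atTop (𝓝 (f.2 s)) := by
      apply tendsto_of_tendsto_of_tendsto_of_le_of_le'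
        ((hd2.continuousAt.tendsto).comp hut) ((hd2.continuousAt.tendsto).comp hvt)
      · filter_upwards [eventually_ge_atTop 1] with n hn
        obtain ⟨-,-,-,-,-,-,-,-,-,-,-,-,-,h14,-⟩ := hfacts n hn
        exact h14
      · filter_upwards [eventually_ge_atTop 1] with n hn
        obtain ⟨-,-,-,-,-,-,-,-,-,-,-,-,-,-,h15⟩ := hfacts n hn
        exact h15
    have hx0 : 0 < f.1 s := lt_of_lt_of_le (by positivity) (hG1 s ⟨hs0.le, hs1.le⟩).1
    have hy0 : 0 < f.2 s := lt_of_lt_of_le (by positivity) (hG2 s ⟨hs0.le, hs1.le⟩).1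
    have hR : Tendsto (fun n => RstarX ((fn n).1 s) ((fn n).2 s)) atTop
        (𝓝 (RstarX (f.1 s) (f.2 s))) := by
      rw [RstarX_eq_of_pos hx0 hy0]
      have hratio : Tendsto (fun n => (fn n).2 s / (fn n).1 s) atTop
          (𝓝 (f.2 s / f.1 s)) := hy.div hx hx0.ne'
      have hmax : Tendsto (fun n => max (1/2) ((fn n).2 s / (fn n).1 s - 1/2)) atTop
          (𝓝 (max (1/2) (f.2 s / f.1 s - 1/2))) :=
        tendsto_const_nhds.max (hratio.sub tendsto_const_nhds)
      apply hmax.congr'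
      filter_upwards [hx.eventually (lt_mem_nhds hx0), hy.eventually (lt_mem_nhds hy0)]
        with n h1 h2
      exact (RstarX_eq_of_pos h1 h2).symm
    have htot := hR.mul hderiv_t
    exact (Real.continuous_sqrt.continuousAt.tendsto).comp htot
  -- a.e. measurability of the approximating integrands
  have hmeasG : ∀ n : ℕ, 1 ≤ n → AEMeasurable (G n) μ := by
    intro n hn
    have m1 : AEMeasurable (fn n).1 μ := pl_aemeas hn (hinterp n hn).1 ha hb
    have m2 : AEMeasurable (fn n).2 μ := pl_aemeas hn (hinterp n hn).2.1 ha hb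
    exact Real.continuous_sqrt.measurable.comp_aemeasurable
      ((measurable_rstarX.comp_aemeasurable (m1.prodMk m2)).mul
        (measurable_deriv (fn n).1).aemeasurable)
  -- master facts hold a.e.
  have hmaster_ae : ∀ n : ℕ, 1 ≤ n → ∀ᵐ s ∂μ,
      0 ≤ deriv (fn n).1 s ∧ deriv (fn n).1 s ≤ (n:ℝ)*M ∧
      0 ≤ (fn n).1 s ∧ 0 ≤ (fn n).2 s ∧ (fn n).2 s ≤ M^2 * (fn n).1 s := by
    intro n hn
    filter_upwards [ae_restrict_mem measurableSet_Ioc, ae_restrict_of_ae hgridae]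
      with s hs hsQ
    have hs0 : 0 < s := (hmem01 s hs).1
    have hs1 : s < 1 := lt_of_le_of_ne (hmem01 s hs).2 (fun h => hsQ (h ▸ hQ1))
    have hfacts := master hM hmono1 hmono2 hG1 hG2 hn (hinterp n hn).1 (hinterp n hn).2.1
      (hinterp n hn).2.2 hs0 hs1 hsQ
    exact ⟨hfacts.2.2.2.2.2.2.1, hfacts.2.2.2.2.2.2.2.1, hfacts.2.2.2.2.2.2.2.2.1,
      hfacts.2.2.2.2.2.2.2.2.2.1, hfacts.2.2.2.2.2.2.2.2.2.2.1⟩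
  -- pointwise a.e. bound via sqrt
  have hGbd : ∀ n : ℕ, 1 ≤ n → ∀ᵐ s ∂μ, G n s ≤ M/2 * (1 + deriv (fn n).1 s) := by
    intro n hn
    filter_upwards [hmaster_ae n hn] with s hsf
    obtain ⟨hd0, hdM, hx0, hy0, hxy⟩ := hsf
    have h1 : RstarX ((fn n).1 s) ((fn n).2 s) * deriv (fn n).1 s
        ≤ M^2 * deriv (fn n).1 s :=
      mul_le_mul_of_nonneg_right (RstarX_le_sq hM.le hy0 hxy) hd0
    have h2 : G n s ≤ Real.sqrt (M^2 * deriv (fn n).1 s) := Real.sqrt_le_sqrt h1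
    have h3 : Real.sqrt (M^2 * deriv (fn n).1 s) = M * Real.sqrt (deriv (fn n).1 s) := by
      rw [Real.sqrt_mul (sq_nonneg M), Real.sqrt_sq hM0.le]
    have h4 : Real.sqrt (deriv (fn n).1 s) ≤ (1 + deriv (fn n).1 s)/2 := by
      nlinarith [Real.sq_sqrt hd0, Real.sqrt_nonneg (deriv (fn n).1 s),
        sq_nonneg (Real.sqrt (deriv (fn n).1 s) - 1)]
    calc G n s ≤ M * Real.sqrt (deriv (fn n).1 s) := by rw [← h3]; exact h2
      _ ≤ M * ((1 + deriv (fn n).1 s)/2) :=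
          mul_le_mul_of_nonneg_left h4 hM0.le
      _ = M/2 * (1 + deriv (fn n).1 s) := by ring
  -- integrability of deriv (fn n).1
  have hd_int : ∀ n : ℕ, 1 ≤ n → Integrable (fun s => deriv (fn n).1 s) μ := by
    intro n hn
    have hc : Integrable (fun _ : ℝ => (n:ℝ)*M) μ := by
      refine integrableOn_const ?_ enorm_ne_top
      rw [Real.volume_Ioc]
      exact ENNReal.ofReal_ne_top
    apply hc.mono' (measurable_deriv (fn n).1).aestronglyMeasurable
    filter_upwards [hmaster_ae n hn] with s hsf
    rw [Real.norm_eq_abs, abs_of_nonneg hsf.1]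
    exact hsf.2.1
  -- integrability of G n
  have hintG : ∀ n : ℕ, 1 ≤ n → Integrable (G n) μ := by
    intro n hn
    have hc : Integrable (fun _ : ℝ => M/2 * (1 + (n:ℝ)*M)) μ := by
      refine integrableOn_const ?_ enorm_ne_top
      rw [Real.volume_Ioc]
      exact ENNReal.ofReal_ne_top
    apply hc.mono' (hmeasG n hn).aestronglyMeasurable
    filter_upwards [hGbd n hn, hmaster_ae n hn] with s h1 h2
    rw [Real.norm_eq_abs, abs_of_nonneg (Real.sqrt_nonneg _)]
    refine h1.trans ?_
    have := h2.2.1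
    nlinarith [hM0.le]
  -- uniform bound on the integrals
  have hIbd : ∀ n : ℕ, 1 ≤ n → I n ≤ M/2 * (1 + M) := by
    intro n hn
    have hone : Integrable (fun _ : ℝ => (1:ℝ)) μ := by
      refine integrableOn_const ?_ enorm_ne_top
      rw [Real.volume_Ioc]
      exact ENNReal.ofReal_ne_top
    have hrhs : Integrable (fun s => M/2 * (1 + deriv (fn n).1 s)) μ :=
      ((hone.add (hd_int n hn))).const_mul (M/2)
    have step1 : I n ≤ ∫ s, M/2 * (1 + deriv (fn n).1 s) ∂μ :=
      integral_mono_ae (hintG n hn) hrhs (hGbd n hn)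
    have hgridmono : ∀ i : ℕ, i < n →
        (fn n).1 ((i:ℝ)/n) ≤ (fn n).1 (((i:ℝ)+1)/n) := by
      intro i hi
      have hcast : ((i:ℝ)+1)/(n:ℝ) = (((i+1:ℕ)):ℝ)/n := by push_cast; ring
      rw [((hinterp n hn).2.2 i hi.le).1, hcast, ((hinterp n hn).2.2 (i+1) hi).1]
      apply hmono1
      rw [← hcast]
      have hn0 : (0:ℝ) < n := by exact_mod_cast hn
      gcongr
      linarith
    have hder_bd : ∫ s, deriv (fn n).1 s ∂μ ≤ M := by
      have h1 := pl_integral_deriv hn (hinterp n hn).1 hgridmono ha hb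
      have hn0 : (0:ℝ) < n := by exact_mod_cast hn
      have e1 : (fn n).1 1 = f.1 1 := by
        have := ((hinterp n hn).2.2 n le_rfl).1
        rwa [div_self hn0.ne'] at this
      have e0 : (fn n).1 0 = f.1 0 := by
        have := ((hinterp n hn).2.2 0 (Nat.zero_le n)).1
        rwa [Nat.cast_zero, zero_div] at this
      have hf1 : f.1 1 ≤ M := by
        have := (hG1 1 ⟨zero_le_one, le_refl 1⟩).2
        linarith
      have hf0 : 0 ≤ f.1 0 := by
        have := (hG1 0 ⟨le_refl 0, zero_le_one⟩).1
        simpa using this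
      calc ∫ s, deriv (fn n).1 s ∂μ ≤ (fn n).1 1 - (fn n).1 0 := h1
        _ = f.1 1 - f.1 0 := by rw [e1, e0]
        _ ≤ M := by linarith
    have hvol : ∫ s, (1:ℝ) ∂μ ≤ 1 := by
      rw [integral_const, smul_eq_mul, mul_one, hμ, measureReal_restrict_apply_univ, measureReal_def,
        Real.volume_Ioc, ENNReal.toReal_ofReal (by linarith)]
      linarith
    have step2 : ∫ s, M/2 * (1 + deriv (fn n).1 s) ∂μ ≤ M/2 * (1 + M) := by
      rw [integral_const_mul, integral_add hone (hd_int n hn)]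
      have : ∫ s, (1:ℝ) ∂μ + ∫ s, deriv (fn n).1 s ∂μ ≤ 1 + M :=
        add_le_add hvol hder_bd
      nlinarith [hM0.le]
    exact step1.trans step2
  have hInn : ∀ n : ℕ, 0 ≤ I n :=
    fun n => integral_nonneg (fun s => Real.sqrt_nonneg _)
  -- measurability of H
  have hHsm : AEStronglyMeasurable H μ :=
    (Real.continuous_sqrt.measurable.comp
      ((measurable_rstarX.comp (hmono1.measurable.prodMk hmono2.measurable)).mul
        (measurable_deriv f.1))).aestronglyMeasurable
  -- ENNReal chain
  have step1 : ∫ s, H s ∂μ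
      = (∫⁻ s, ENNReal.ofReal (H s) ∂μ).toReal :=
    integral_eq_lintegral_of_nonneg_ae (ae_of_all _ (fun s => Real.sqrt_nonneg _)) hHsm
  have step2 : ∫⁻ s, ENNReal.ofReal (H s) ∂μ
      ≤ liminf (fun n => ∫⁻ s, ENNReal.ofReal (G (n+1) s) ∂μ) atTop := by
    have heq : (fun s => ENNReal.ofReal (H s))
        =ᵐ[μ] fun s => liminf (fun n => ENNReal.ofReal (G (n+1) s)) atTop := by
      filter_upwards [hconv] with s hs
      exact ((ENNReal.continuous_ofReal.continuousAt.tendsto.comp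
        (hs.comp (tendsto_add_atTop_nat 1))).liminf_eq).symm
    rw [lintegral_congr_ae heq]
    exact lintegral_liminf_le'
      (fun n => ENNReal.measurable_ofReal.comp_aemeasurable (hmeasG (n+1) (by omega)))
  have step3 : ∀ n : ℕ, ∫⁻ s, ENNReal.ofReal (G (n+1) s) ∂μ = ENNReal.ofReal (I (n+1)) :=
    fun n => (ofReal_integral_eq_lintegral_ofReal (hintG (n+1) (by omega))
      (ae_of_all _ (fun s => Real.sqrt_nonneg _))).symm
  have hbddabove : IsBoundedUnder (· ≤ ·) atTop (fun n : ℕ => I (n+1)) :=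
    isBoundedUnder_of ⟨M/2 * (1 + M), fun n => hIbd (n+1) (by omega)⟩
  have hbddbelow : IsBoundedUnder (· ≥ ·) atTop (fun n : ℕ => I (n+1)) :=
    isBoundedUnder_of ⟨0, fun n => hInn (n+1)⟩
  have step4 : liminf (fun n => ∫⁻ s, ENNReal.ofReal (G (n+1) s) ∂μ) atTop
      = ENNReal.ofReal (liminf I atTop) := by
    have e1 : (fun n => ∫⁻ s, ENNReal.ofReal (G (n+1) s) ∂μ)
        = fun n => ENNReal.ofReal (I (n+1)) := funext step3
    rw [e1]
    have e2 := (Monotone.map_liminf_of_continuousAt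
      (f := ENNReal.ofReal) (F := atTop)
      (fun p q hpq => ENNReal.ofReal_le_ofReal hpq) (fun n : ℕ => I (n+1))
      ENNReal.continuous_ofReal.continuousAt hbddabove.isCoboundedUnder_ge hbddbelow).symm
    rw [show (ENNReal.ofReal ∘ fun n : ℕ => I (n+1)) = fun n : ℕ => ENNReal.ofReal (I (n+1))
      from rfl] at e2
    rw [e2, liminf_nat_add]
  have hliminf_nn : 0 ≤ liminf I atTop := by
    have hcob : IsCoboundedUnder (· ≥ ·) atTop I := by
      apply IsBoundedUnder.isCoboundedUnder_ge
      refine ⟨M/2 * (1 + M), ?_⟩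
      rw [eventually_map]
      filter_upwards [eventually_ge_atTop 1] with n hn
      exact hIbd n hn
    exact le_liminf_of_le hcob (Eventually.of_forall hInn)
  rw [step1]
  have := step2.trans_eq step4
  calc (∫⁻ s, ENNReal.ofReal (H s) ∂μ).toReal
      ≤ (ENNReal.ofReal (liminf I atTop)).toReal :=
        ENNReal.toReal_mono ENNReal.ofReal_ne_top this
    _ = liminf I atTop := ENNReal.toReal_ofReal hliminf_nn
end
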